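/- arXiv:2101.11140 — 6 statements merged into one kernel-verified Lean document; each statement's English description precedes it below -/
import Mathlib

section
/- Let m ≥ 3, let A be a semi-symmetric strong M-tensor of order m and dimension n, let b ∈ ℝⁿ with b ≥ 0, I₊ = {i : b_i > 0} nonempty, I₀ = {i : b_i = 0}, and suppose for every i ∈ I₀ there exist indices i₂,…,i_m ∈ I₊ with a_{i i₂…i_m} ≠ 0. Let 0 < ε′ < ε < 1. Then for every y ∈ F̄_{ε,ε′}, the Jacobian matrix f'(y) is a nonsingular M-matrix. -/
open Finset Matrix Filter Topology

noncomputable section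

/-- `(A x^{m-1})_i`: action of an `m`th-order `n`-dimensional tensor, stored with its first
index separated and `q = m-1` trailing indices:
`(A x^{m-1})_i = ∑_{i₂,…,i_m} a_{i i₂…i_m} x_{i₂}⋯x_{i_m}`. -/
def tApp {n q : ℕ} (A : Fin n → (Fin q → Fin n) → ℝ) (x : Fin n → ℝ) (i : Fin n) : ℝ :=
  ∑ g : Fin q → Fin n, A i g * ∏ j, x (g j)

/-- Complex version of `tApp` (for eigenvalues). -/
def tAppC {n q : ℕ} (A : Fin n → (Fin q → Fin n) → ℝ) (x : Fin n → ℂ) (i : Fin n) : ℂ :=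
  ∑ g : Fin q → Fin n, (A i g : ℂ) * ∏ j, x (g j)

/-- The identity tensor: entry `1` when all indices coincide, `0` otherwise. -/
def identT (n q : ℕ) : Fin n → (Fin q → Fin n) → ℝ :=
  fun i g => if ∀ j, g j = i then 1 else 0

/-- `lam ∈ ℂ` is an eigenvalue of the tensor `B`: there is a nonzero `x ∈ ℂⁿ` with
`(B x^{m-1})_i = lam * x_i^{m-1}` for all `i`. -/
def IsTensorEigenvalue {n q : ℕ} (B : Fin n → (Fin q → Fin n) → ℝ) (lam : ℂ) : Prop :=
  ∃ x : Fin n → ℂ, x ≠ 0 ∧ ∀ i, tAppC B x i = lam * x i ^ q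

/-- Semi-symmetry: the entries `a_{i i₂…i_m}` are invariant under permutations of `i₂,…,i_m`. -/
def IsSemiSymmetric {n q : ℕ} (A : Fin n → (Fin q → Fin n) → ℝ) : Prop :=
  ∀ (i : Fin n) (g : Fin q → Fin n) (σ : Equiv.Perm (Fin q)), A i (g ∘ σ) = A i g

/-- Z-tensor: all off-diagonal entries are nonpositive. -/
def IsZTensor {n q : ℕ} (A : Fin n → (Fin q → Fin n) → ℝ) : Prop :=
  ∀ (i : Fin n) (g : Fin q → Fin n), ¬(∀ j, g j = i) → A i g ≤ 0

/-- Strong (nonsingular) M-tensor: `A = s·I − B` with `B ≥ 0` and `s > ρ(B)`,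
i.e. `|λ| < s` for every eigenvalue `λ` of `B`. -/
def IsStrongMTensor {n q : ℕ} (A : Fin n → (Fin q → Fin n) → ℝ) : Prop :=
  ∃ (s : ℝ) (B : Fin n → (Fin q → Fin n) → ℝ),
    (∀ i g, 0 ≤ B i g) ∧ (∀ i g, A i g = s * identT n q i g - B i g) ∧
    ∀ lam : ℂ, IsTensorEigenvalue B lam → ‖lam‖ < s

/-- Componentwise power `y^{[α]}`. -/
def cPow {n : ℕ} (y : Fin n → ℝ) (α : ℝ) : Fin n → ℝ := fun i => y i ^ α

/-- Euclidean norm on `Fin n → ℝ`. -/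
def enorm2 {n : ℕ} (x : Fin n → ℝ) : ℝ := Real.sqrt (∑ i, x i ^ 2)

/-- The Jacobian matrix of a map `f : ℝⁿ → ℝⁿ` at `y`. -/
def jacM {n : ℕ} (f : (Fin n → ℝ) → Fin n → ℝ) (y : Fin n → ℝ) :
    Matrix (Fin n) (Fin n) ℝ :=
  fun i j => fderiv ℝ (fun z => f z i) y (Pi.single j 1)

/-- `f(y) = A (y^{[1/(m-1)]})^{m-1} − b`, with `q = m−1`. -/
def fres {n q : ℕ} (A : Fin n → (Fin q → Fin n) → ℝ) (b : Fin n → ℝ)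
    (y : Fin n → ℝ) : Fin n → ℝ :=
  fun i => tApp A (cPow y (1 / (q : ℝ))) i - b i

/-- Nonsingular M-matrix: nonpositive off-diagonal entries and `M = s·1 − N` with
`N ≥ 0` entrywise and `s` larger than the spectral radius of `N`. -/
def IsNonsingularMMatrix {k : Type} [Fintype k] [DecidableEq k] (M : Matrix k k ℝ) : Prop :=
  (∀ i j, i ≠ j → M i j ≤ 0) ∧
  ∃ (s : ℝ) (N : Matrix k k ℝ), (∀ i j, 0 ≤ N i j) ∧
    M = s • (1 : Matrix k k ℝ) - N ∧
    ∀ μ ∈ spectrum ℂ (N.map (fun t : ℝ => (t : ℂ))), ‖μ‖ < s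

/-- The feasible set `F_ε = {y > 0 : A (y^{[1/(m-1)]})^{m-1} ≥ ε b}`. -/
def FSet {n q : ℕ} (A : Fin n → (Fin q → Fin n) → ℝ) (b : Fin n → ℝ) (ε : ℝ) :
    Set (Fin n → ℝ) :=
  {y | (∀ i, 0 < y i) ∧ ∀ i, ε * b i ≤ tApp A (cPow y (1 / (q : ℝ))) i}

/-- Acceptance of the trial steplength `t` in the line search: feasibility and
`‖f(y + t d)‖² ≤ (1 − 2σt)‖f(y)‖²`. -/
def StepOK {n q : ℕ} (A : Fin n → (Fin q → Fin n) → ℝ) (b : Fin n → ℝ)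
    (Fb : Set (Fin n → ℝ)) (σ : ℝ) (y d : Fin n → ℝ) (t : ℝ) : Prop :=
  y + t • d ∈ Fb ∧
    enorm2 (fres A b (y + t • d)) ^ 2 ≤ (1 - 2 * σ * t) * enorm2 (fres A b y) ^ 2

/-- Newton's method (Algorithm 2.4 resp. 3.4) with feasible set `Fb`, never terminating:
`y₀ ∈ Fb`; for every `k`, `f(y_k) ≠ 0`, `d_k` is the unique solution of
`f'(y_k) d = −f(y_k)`, `α_k = ρ^{i_k}` with `i_k` the least acceptable exponent, and
`y_{k+1} = y_k + α_k d_k`. -/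
def NewtonIter {n q : ℕ} (A : Fin n → (Fin q → Fin n) → ℝ) (b : Fin n → ℝ)
    (Fb : Set (Fin n → ℝ)) (σ ρ : ℝ) (y d : ℕ → Fin n → ℝ) (α : ℕ → ℝ) : Prop :=
  y 0 ∈ Fb ∧ ∀ k : ℕ,
    fres A b (y k) ≠ 0 ∧
    jacM (fres A b) (y k) *ᵥ d k = -fres A b (y k) ∧
    (∀ d', jacM (fres A b) (y k) *ᵥ d' = -fres A b (y k) → d' = d k) ∧
    (∃ ik : ℕ, α k = ρ ^ ik ∧ StepOK A b Fb σ (y k) (d k) (ρ ^ ik) ∧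
      ∀ i < ik, ¬StepOK A b Fb σ (y k) (d k) (ρ ^ i)) ∧
    y (k + 1) = y k + α k • d k

/-- Submatrix of `M` with rows indexed by `{i // P i}` and columns by `{i // Q i}`. -/
def subMat {n : ℕ} (M : Matrix (Fin n) (Fin n) ℝ) (P Q : Fin n → Prop) :
    Matrix {i // P i} {i // Q i} ℝ :=
  fun i j => M i.1 j.1

/-- `b` restricted to the index set `I₊ = {i : b_i > 0}`. -/
def bPlus {n : ℕ} (b : Fin n → ℝ) : {i : Fin n // 0 < b i} → ℝ := fun i => b i.1

/-- `F̄¹_ε = {y > 0 : (A(y^{[1/(m−1)]})^{m−1})_i ≥ ε b_i for all i ∈ I₊}`. -/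
def FBar1 {n q : ℕ} (A : Fin n → (Fin q → Fin n) → ℝ) (b : Fin n → ℝ) (ε : ℝ) :
    Set (Fin n → ℝ) :=
  {y | (∀ i, 0 < y i) ∧ ∀ i, 0 < b i → ε * b i ≤ tApp A (cPow y (1 / (q : ℝ))) i}

/-- `F̄²_{ε'} = {y > 0 : f'(y)_{I₊I₊} invertible and
`(A(y^{[1/(m−1)]})^{m−1})_{I₀} ≥ ε' f'(y)_{I₀I₊} f'(y)_{I₊I₊}⁻¹ b_{I₊}` componentwise}. -/
def FBar2 {n q : ℕ} (A : Fin n → (Fin q → Fin n) → ℝ) (b : Fin n → ℝ) (ε' : ℝ) :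
    Set (Fin n → ℝ) :=
  {y | (∀ i, 0 < y i) ∧
    IsUnit (subMat (jacM (fres A b) y) (fun i => 0 < b i) (fun i => 0 < b i)) ∧
    ∀ i : {i : Fin n // b i = 0},
      ε' * (subMat (jacM (fres A b) y) (fun i => b i = 0) (fun i => 0 < b i) *ᵥ
        ((subMat (jacM (fres A b) y) (fun i => 0 < b i) (fun i => 0 < b i))⁻¹ *ᵥ bPlus b)) i
        ≤ tApp A (cPow y (1 / (q : ℝ))) i.1}

/-- `F̄_{ε,ε'} = F̄¹_ε ∩ F̄²_{ε'}`. -/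
def FBar {n q : ℕ} (A : Fin n → (Fin q → Fin n) → ℝ) (b : Fin n → ℝ) (ε ε' : ℝ) :
    Set (Fin n → ℝ) :=
  FBar1 A b ε ∩ FBar2 A b ε'

/-- For every `i ∈ I₀` there exist indices `i₂,…,i_m ∈ I₊` with `a_{i i₂…i_m} ≠ 0`. -/
def I0Hyp {n q : ℕ} (A : Fin n → (Fin q → Fin n) → ℝ) (b : Fin n → ℝ) : Prop :=
  ∀ i : Fin n, b i = 0 → ∃ g : Fin q → Fin n, (∀ j, 0 < b (g j)) ∧ A i g ≠ 0


-- AUX LEMMAS (to be inserted before the theorem)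

lemma zmat_pos {k : Type} [Fintype k] [DecidableEq k] (M : Matrix k k ℝ)
    (hZ : ∀ i j, i ≠ j → M i j ≤ 0) (z : k → ℝ) (hz : ∀ i, 0 < z i)
    (hMz : ∀ i, 0 < (M *ᵥ z) i) (v : k → ℝ) (hMv : ∀ i, 0 < (M *ᵥ v) i) :
    ∀ i, 0 < v i := by
  intro i
  have hne : (Finset.univ : Finset k).Nonempty := ⟨i, mem_univ i⟩
  obtain ⟨i₀, -, hmin⟩ := Finset.exists_min_image Finset.univ (fun j => v j / z j) hne
  set t := v i₀ / z i₀ with ht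
  have hle : ∀ j, t * z j ≤ v j := by
    intro j
    have h := hmin j (mem_univ j)
    rw [ht, div_mul_eq_mul_div, div_le_iff₀ (hz i₀)]
    rw [div_le_div_iff₀ (hz i₀) (hz j)] at h
    linarith
  have hkey : (M *ᵥ v) i₀ ≤ t * (M *ᵥ z) i₀ := by
    have h0 : ∑ j, M i₀ j * (v j - t * z j) ≤ 0 := by
      apply Finset.sum_nonpos
      intro j _
      rcases eq_or_ne j i₀ with rfl | hj
      · have : v j - t * z j = 0 := by
          rw [ht, div_mul_cancel₀ (v j) (hz j).ne', sub_self]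
        rw [this]; ring_nf; simp
      · have h1 : M i₀ j ≤ 0 := hZ i₀ j (Ne.symm hj)
        have h2 : 0 ≤ v j - t * z j := by linarith [hle j]
        exact mul_nonpos_of_nonpos_of_nonneg h1 h2
    have : (M *ᵥ v) i₀ - t * (M *ᵥ z) i₀ = ∑ j, M i₀ j * (v j - t * z j) := by
      simp only [Matrix.mulVec, dotProduct, Finset.mul_sum, ← Finset.sum_sub_distrib]
      congr 1; ext j; ring
    linarith [this ▸ h0]
  have htpos : 0 < t := by
    by_contra h
    push_neg at h
    nlinarith [hMv i₀, hMz i₀]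
  have := hle i
  nlinarith [hz i]

lemma spec_bound {k : Type} [Fintype k] [DecidableEq k] (N : Matrix k k ℝ) (s : ℝ)
    (hN : ∀ i j, 0 ≤ N i j) (x : k → ℝ) (hx : ∀ i, 0 < x i)
    (hNx : ∀ i, (N *ᵥ x) i < s * x i) :
    ∀ μ ∈ spectrum ℂ (N.map (fun t : ℝ => (t : ℂ))), ‖μ‖ < s := by
  intro μ hμ
  set Nc := N.map (fun t : ℝ => (t : ℂ)) with hNc
  rw [spectrum.mem_iff] at hμ
  rw [Matrix.isUnit_iff_isUnit_det] at hμ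
  rw [isUnit_iff_ne_zero, not_ne_iff] at hμ
  obtain ⟨v, hv0, hv⟩ := (Matrix.exists_mulVec_eq_zero_iff).2 hμ
  have heig : Nc *ᵥ v = μ • v := by
    have : (algebraMap ℂ (Matrix k k ℂ)) μ = μ • 1 := Algebra.algebraMap_eq_smul_one μ
    rw [this] at hv
    rw [Matrix.sub_mulVec, Matrix.smul_mulVec, Matrix.one_mulVec, sub_eq_zero] at hv
    exact hv.symm
  obtain ⟨j₀, hj₀⟩ := Function.ne_iff.1 hv0
  have hne : (Finset.univ : Finset k).Nonempty := ⟨j₀, mem_univ j₀⟩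
  obtain ⟨i₀, -, hmax⟩ := Finset.exists_max_image Finset.univ (fun j => ‖v j‖ / x j) hne
  set r := ‖v i₀‖ / x i₀ with hr
  have hrle : ∀ j, ‖v j‖ ≤ r * x j := by
    intro j
    have h := hmax j (mem_univ j)
    rw [hr, div_mul_eq_mul_div, le_div_iff₀ (hx i₀)]
    rw [div_le_div_iff₀ (hx j) (hx i₀)] at h
    linarith
  have hrpos : 0 < r := by
    have h1 : 0 < ‖v j₀‖ := by
      have : v j₀ ≠ 0 := by simpa using hj₀
      exact norm_pos_iff.mpr this
    have := hmax j₀ (mem_univ j₀)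
    have h2 : 0 < ‖v j₀‖ / x j₀ := div_pos h1 (hx j₀)
    linarith
  have hvi₀ : ‖v i₀‖ = r * x i₀ := by
    rw [hr, div_mul_cancel₀ _ (hx i₀).ne']
  have hvpos : 0 < ‖v i₀‖ := by
    rw [hvi₀]; exact mul_pos hrpos (hx i₀)
  have hchain : ‖μ‖ * ‖v i₀‖ < s * ‖v i₀‖ := by
    have e1 : ‖μ‖ * ‖v i₀‖ = ‖(Nc *ᵥ v) i₀‖ := by
      rw [heig]
      simp [Pi.smul_apply, smul_eq_mul, _root_.map_mul]
    have e2 : ‖(Nc *ᵥ v) i₀‖ ≤ ∑ j, N i₀ j * ‖v j‖ := by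
      rw [Matrix.mulVec, dotProduct]
      refine le_trans (norm_sum_le _ _) ?_
      apply Finset.sum_le_sum
      intro j _
      rw [norm_mul]
      simp only [hNc, Matrix.map_apply, Complex.norm_real, Real.norm_eq_abs]
      rw [abs_of_nonneg (hN i₀ j)]
    have e3 : ∑ j, N i₀ j * ‖v j‖ ≤ r * (N *ᵥ x) i₀ := by
      rw [Matrix.mulVec, dotProduct, Finset.mul_sum]
      apply Finset.sum_le_sum
      intro j _
      have := hrle j
      nlinarith [hN i₀ j]
    have e4 : r * (N *ᵥ x) i₀ < r * (s * x i₀) := mul_lt_mul_of_pos_left (hNx i₀) hrpos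
    calc ‖μ‖ * ‖v i₀‖ = ‖(Nc *ᵥ v) i₀‖ := e1
      _ ≤ ∑ j, N i₀ j * ‖v j‖ := e2
      _ ≤ r * (N *ᵥ x) i₀ := e3
      _ < r * (s * x i₀) := e4
      _ = s * ‖v i₀‖ := by rw [hvi₀]; ring
  exact lt_of_mul_lt_mul_right hchain hvpos.le

lemma sum_split {n : ℕ} (b : Fin n → ℝ) (hb : ∀ i, 0 ≤ b i) (f : Fin n → ℝ) :
    ∑ j, f j = (∑ j : {i : Fin n // 0 < b i}, f j.1) + ∑ j : {i : Fin n // b i = 0}, f j.1 := by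
  rw [← Finset.sum_filter_add_sum_filter_not Finset.univ (fun j => 0 < b j) f]
  congr 1
  · rw [Finset.sum_subtype (p := fun i => 0 < b i)
      (Finset.univ.filter (fun j => 0 < b j)) (by simp) f]
  · rw [Finset.sum_subtype (p := fun i => b i = 0)
      (Finset.univ.filter (fun j => ¬ 0 < b j))
      (fun x => by
        simp only [Finset.mem_filter, Finset.mem_univ, true_and, not_lt]
        exact ⟨fun h => le_antisymm h (hb x), fun h => le_of_eq h⟩) f]

def coefD {n : ℕ} (q : ℕ) (y : Fin n → ℝ) (g : Fin q → Fin n) (j : Fin n) : ℝ :=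
  ∑ k : Fin q, if g k = j then
    (∏ l ∈ Finset.univ.erase k, y (g l) ^ (1/(q:ℝ))) * ((1/(q:ℝ)) * y (g k) ^ ((1/(q:ℝ)) - 1))
  else 0


lemma hasfderiv_hg {n q : ℕ} (y : Fin n → ℝ) (hy : ∀ i, 0 < y i) (g : Fin q → Fin n) :
    HasFDerivAt (fun z : Fin n → ℝ => ∏ l : Fin q, z (g l) ^ (1/(q:ℝ)))
      (∑ k : Fin q, (∏ l ∈ Finset.univ.erase k, y (g l) ^ (1/(q:ℝ))) •
        (((1/(q:ℝ)) * y (g k) ^ ((1/(q:ℝ)) - 1)) • (ContinuousLinearMap.proj (g k) :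
          (Fin n → ℝ) →L[ℝ] ℝ))) y := by
  apply HasFDerivAt.finset_prod
  intro k _
  have hproj : HasFDerivAt (fun z : Fin n → ℝ => z (g k))
      (ContinuousLinearMap.proj (g k) : (Fin n → ℝ) →L[ℝ] ℝ) y :=
    by exact (ContinuousLinearMap.proj (g k) :
      (Fin n → ℝ) →L[ℝ] ℝ).hasFDerivAt
  exact hproj.rpow_const (Or.inl (hy (g k)).ne')

lemma jac_apply {n q : ℕ} (A : Fin n → (Fin q → Fin n) → ℝ) (b : Fin n → ℝ)
    (y : Fin n → ℝ) (hy : ∀ i, 0 < y i) (i j : Fin n) :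
    jacM (fres A b) y i j = ∑ g : Fin q → Fin n, A i g * coefD q y g j := by
  have hF : HasFDerivAt (fun z => fres A b z i)
      (∑ g : Fin q → Fin n, A i g • (∑ k : Fin q,
        (∏ l ∈ Finset.univ.erase k, y (g l) ^ (1/(q:ℝ))) •
        (((1/(q:ℝ)) * y (g k) ^ ((1/(q:ℝ)) - 1)) • (ContinuousLinearMap.proj (g k) :
          (Fin n → ℝ) →L[ℝ] ℝ)))) y := by
    have : (fun z => fres A b z i) = fun z : Fin n → ℝ =>
        (∑ g : Fin q → Fin n, A i g * ∏ l : Fin q, z (g l) ^ (1/(q:ℝ))) - b i := by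
      funext z; rfl
    rw [this]
    apply HasFDerivAt.sub_const
    apply HasFDerivAt.fun_sum
    intro g _
    exact (hasfderiv_hg y hy g).const_mul (A i g)
  rw [jacM, hF.fderiv]
  rw [ContinuousLinearMap.sum_apply]
  apply Finset.sum_congr rfl
  intro g _
  rw [ContinuousLinearMap.smul_apply, ContinuousLinearMap.sum_apply, smul_eq_mul]
  congr 1
  rw [coefD]
  apply Finset.sum_congr rfl
  intro k _
  rw [ContinuousLinearMap.smul_apply, ContinuousLinearMap.smul_apply,
    ContinuousLinearMap.proj_apply, smul_eq_mul, smul_eq_mul]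
  rcases eq_or_ne (g k) j with h | h
  · rw [if_pos h, h, Pi.single_eq_same]; ring
  · rw [if_neg h, Pi.single_eq_of_ne h, mul_zero, mul_zero]

lemma coefD_nonneg {n q : ℕ} (y : Fin n → ℝ) (hy : ∀ i, 0 < y i) (g : Fin q → Fin n)
    (j : Fin n) : 0 ≤ coefD q y g j := by
  apply Finset.sum_nonneg
  intro k _
  split
  · apply mul_nonneg
    · exact Finset.prod_nonneg fun l _ => (Real.rpow_pos_of_pos (hy (g l)) _).le
    · exact mul_nonneg (by positivity) (Real.rpow_pos_of_pos (hy (g k)) _).le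
  · exact le_refl 0

lemma coefD_pos {n q : ℕ} (hq : q ≠ 0) (y : Fin n → ℝ) (hy : ∀ i, 0 < y i)
    (g : Fin q → Fin n) (j : Fin n) (k : Fin q) (hk : g k = j) : 0 < coefD q y g j := by
  have hqc : (0:ℝ) < 1/(q:ℝ) := by
    have : (0:ℝ) < (q:ℝ) := by exact_mod_cast Nat.pos_of_ne_zero hq
    positivity
  apply Finset.sum_pos'
  · intro l _
    split
    · apply mul_nonneg
      · exact Finset.prod_nonneg fun l' _ => (Real.rpow_pos_of_pos (hy (g l')) _).le
      · exact mul_nonneg hqc.le (Real.rpow_pos_of_pos (hy (g l)) _).le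
    · exact le_refl 0
  · refine ⟨k, Finset.mem_univ k, ?_⟩
    rw [if_pos hk]
    apply mul_pos
    · exact Finset.prod_pos fun l' _ => Real.rpow_pos_of_pos (hy (g l')) _
    · exact mul_pos hqc (Real.rpow_pos_of_pos (hy (g k)) _)

lemma coefD_euler {n q : ℕ} (hq : q ≠ 0) (y : Fin n → ℝ) (hy : ∀ i, 0 < y i)
    (g : Fin q → Fin n) :
    ∑ j : Fin n, coefD q y g j * y j = ∏ l : Fin q, y (g l) ^ (1/(q:ℝ)) := by
  have hqR : ((q:ℝ)) ≠ 0 := by exact_mod_cast hq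
  have step1 : ∑ j : Fin n, coefD q y g j * y j
      = ∑ k : Fin q, (∏ l ∈ Finset.univ.erase k, y (g l) ^ (1/(q:ℝ))) *
          ((1/(q:ℝ)) * y (g k) ^ ((1/(q:ℝ)) - 1)) * y (g k) := by
    simp only [coefD, Finset.sum_mul]
    rw [Finset.sum_comm]
    apply Finset.sum_congr rfl
    intro k _
    simp only [ite_mul, zero_mul]
    rw [Finset.sum_ite_eq]
    simp
  rw [step1]
  have step2 : ∀ k : Fin q, (∏ l ∈ Finset.univ.erase k, y (g l) ^ (1/(q:ℝ))) *
      ((1/(q:ℝ)) * y (g k) ^ ((1/(q:ℝ)) - 1)) * y (g k)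
      = (1/(q:ℝ)) * ∏ l : Fin q, y (g l) ^ (1/(q:ℝ)) := by
    intro k
    have h1 : y (g k) ^ ((1/(q:ℝ)) - 1) * y (g k) = y (g k) ^ (1/(q:ℝ)) := by
      nth_rewrite 2 [← Real.rpow_one (y (g k))]
      rw [← Real.rpow_add (hy (g k))]
      norm_num
    have h2 : y (g k) ^ (1/(q:ℝ)) * ∏ l ∈ Finset.univ.erase k, y (g l) ^ (1/(q:ℝ))
        = ∏ l : Fin q, y (g l) ^ (1/(q:ℝ)) :=
      Finset.mul_prod_erase Finset.univ (fun l => y (g l) ^ (1/(q:ℝ))) (Finset.mem_univ k)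
    calc (∏ l ∈ Finset.univ.erase k, y (g l) ^ (1/(q:ℝ))) *
        ((1/(q:ℝ)) * y (g k) ^ ((1/(q:ℝ)) - 1)) * y (g k)
        = (1/(q:ℝ)) * ((y (g k) ^ ((1/(q:ℝ)) - 1) * y (g k)) *
            ∏ l ∈ Finset.univ.erase k, y (g l) ^ (1/(q:ℝ))) := by ring
      _ = (1/(q:ℝ)) * ∏ l : Fin q, y (g l) ^ (1/(q:ℝ)) := by rw [h1, h2]
  rw [Finset.sum_congr rfl (fun k _ => step2 k), Finset.sum_const, Finset.card_univ,
    Fintype.card_fin, nsmul_eq_mul]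
  field_simp

lemma coefD_const {n q : ℕ} (hq : q ≠ 0) (y : Fin n → ℝ) (hy : ∀ i, 0 < y i)
    (i j : Fin n) : coefD q y (fun _ => i) j = if i = j then 1 else 0 := by
  have hqR : ((q:ℝ)) ≠ 0 := by exact_mod_cast hq
  rcases eq_or_ne i j with rfl | h
  · rw [if_pos rfl, coefD]
    have key : ∀ k : Fin q, (if i = i then
        (∏ l ∈ Finset.univ.erase k, y i ^ (1/(q:ℝ))) * ((1/(q:ℝ)) * y i ^ ((1/(q:ℝ)) - 1))
        else 0) = 1/(q:ℝ) := by
      intro k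
      rw [if_pos rfl, Finset.prod_const, Finset.card_erase_of_mem (Finset.mem_univ k),
        Finset.card_univ, Fintype.card_fin]
      rw [← Real.rpow_natCast (y i ^ (1/(q:ℝ))) (q-1), ← Real.rpow_mul (hy i).le]
      rw [mul_comm (1/(q:ℝ)) (y i ^ ((1/(q:ℝ)) - 1)), ← mul_assoc, ← Real.rpow_add (hy i)]
      have : (1/(q:ℝ)) * ((q-1 : ℕ):ℝ) + ((1/(q:ℝ)) - 1) = 0 := by
        rw [Nat.cast_sub (Nat.one_le_iff_ne_zero.2 hq)]
        push_cast
        field_simp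
        ring
      rw [this, Real.rpow_zero, one_mul]
    rw [Finset.sum_congr rfl (fun k _ => key k), Finset.sum_const, Finset.card_univ,
      Fintype.card_fin, nsmul_eq_mul]
    field_simp
  · rw [if_neg h, coefD]
    apply Finset.sum_eq_zero
    intro k _
    rw [if_neg h]

lemma coefD_ident {n q : ℕ} (hq : q ≠ 0) (y : Fin n → ℝ) (hy : ∀ i, 0 < y i)
    (i j : Fin n) :
    ∑ g : Fin q → Fin n, identT n q i g * coefD q y g j = if i = j then 1 else 0 := by
  have step : ∀ g : Fin q → Fin n, identT n q i g * coefD q y g j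
      = if g = (fun _ => i) then coefD q y g j else 0 := by
    intro g
    rw [identT]
    rcases eq_or_ne g (fun _ => i) with rfl | h
    · rw [if_pos rfl, if_pos (fun _ => rfl), one_mul]
    · rw [if_neg h, if_neg, zero_mul]
      intro hall
      exact h (funext hall)
  rw [Finset.sum_congr rfl (fun g _ => step g), Finset.sum_ite_eq' Finset.univ
    (fun _ => i) (fun g => coefD q y g j)]
  rw [if_pos (Finset.mem_univ _)]
  exact coefD_const hq y hy i j


theorem jacobian_nonsingular_M_on_FBar {m n : ℕ} (hm : 3 ≤ m)
    (A : Fin n → (Fin (m - 1) → Fin n) → ℝ)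
    (hsym : IsSemiSymmetric A) (hM : IsStrongMTensor A)
    (b : Fin n → ℝ) (hb : ∀ i, 0 ≤ b i) (hbp : ∃ i, 0 < b i) (hI0 : I0Hyp A b)
    (ε ε' : ℝ) (h1 : 0 < ε') (h2 : ε' < ε) (h3 : ε < 1) :
    ∀ y ∈ FBar A b ε ε', IsNonsingularMMatrix (jacM (fres A b) y) := by
  obtain ⟨s, B, hB0, hAB, -⟩ := hM
  intro y hy
  obtain ⟨⟨hypos, hF1⟩, ⟨-, hInv, hF2⟩⟩ := hy
  have hq : m - 1 ≠ 0 := by omega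
  have hq0 : 0 < m - 1 := by omega
  -- notation
  set J := jacM (fres A b) y with hJdef
  have hJ : ∀ i j, J i j = ∑ g : Fin (m - 1) → Fin n, A i g * coefD (m - 1) y g j :=
    fun i j => jac_apply A b y hypos i j
  set NB : Matrix (Fin n) (Fin n) ℝ :=
    fun i j => ∑ g : Fin (m - 1) → Fin n, B i g * coefD (m - 1) y g j with hNBdef
  have hNB0 : ∀ i j, 0 ≤ NB i j := by
    intro i j
    exact Finset.sum_nonneg fun g _ => mul_nonneg (hB0 i g) (coefD_nonneg y hypos g j)
  have hJs : ∀ i j, J i j = s * (if i = j then 1 else 0) - NB i j := by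
    intro i j
    rw [hJ i j]
    have : ∀ g : Fin (m - 1) → Fin n, A i g * coefD (m - 1) y g j
        = s * (identT n (m - 1) i g * coefD (m - 1) y g j) - B i g * coefD (m - 1) y g j := by
      intro g; rw [hAB i g]; ring
    rw [Finset.sum_congr rfl (fun g _ => this g), Finset.sum_sub_distrib,
      ← Finset.mul_sum, coefD_ident hq y hypos i j]
  have hZ : ∀ i j, i ≠ j → J i j ≤ 0 := by
    intro i j hij
    rw [hJs i j, if_neg hij, mul_zero, zero_sub]
    exact neg_nonpos_of_nonneg (hNB0 i j)
  have hEuler : ∀ i, ∑ j, J i j * y j = tApp A (cPow y (1/((m - 1 : ℕ) : ℝ))) i := by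
    intro i
    have : ∀ j, J i j * y j = ∑ g : Fin (m - 1) → Fin n, A i g * (coefD (m - 1) y g j * y j) := by
      intro j
      rw [hJ i j, Finset.sum_mul]
      exact Finset.sum_congr rfl fun g _ => by ring
    rw [Finset.sum_congr rfl (fun j _ => this j), Finset.sum_comm]
    apply Finset.sum_congr rfl
    intro g _
    rw [← Finset.mul_sum, coefD_euler hq y hypos g]
    rfl
  -- index subtypes
  haveI hSne : Nonempty {i : Fin n // 0 < b i} := by
    obtain ⟨i, hi⟩ := hbp; exact ⟨⟨i, hi⟩⟩
  set M := subMat J (fun i => 0 < b i) (fun i => 0 < b i) with hMdef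
  have hMapp : ∀ (i j : {i : Fin n // 0 < b i}), M i j = J i.1 j.1 := fun _ _ => rfl
  set zS : {i : Fin n // 0 < b i} → ℝ := fun j => y j.1 with hzSdef
  -- positivity of M *ᵥ zS
  have hsplit : ∀ i : Fin n, ∑ j, J i j * y j
      = (∑ j : {i : Fin n // 0 < b i}, J i j.1 * y j.1)
        + ∑ j : {i : Fin n // b i = 0}, J i j.1 * y j.1 :=
    fun i => sum_split b hb (fun j => J i j * y j)
  have hMzS : ∀ i : {i : Fin n // 0 < b i}, ε * b i.1 ≤ (M *ᵥ zS) i := by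
    intro i
    have h0 : ∑ j : {i : Fin n // b i = 0}, J i.1 j.1 * y j.1 ≤ 0 := by
      apply Finset.sum_nonpos
      intro j _
      have hij : i.1 ≠ j.1 := fun h => by
        have hb' := i.2
        rw [h, j.2] at hb'
        exact lt_irrefl 0 hb'
      exact mul_nonpos_of_nonpos_of_nonneg (hZ i.1 j.1 hij) (hypos j.1).le
    have hM1 : (M *ᵥ zS) i = ∑ j : {i : Fin n // 0 < b i}, J i.1 j.1 * y j.1 := rfl
    have := hsplit i.1
    rw [hEuler i.1] at this
    have hF := hF1 i.1 i.2
    rw [hM1]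
    linarith
  have hMzSpos : ∀ i, 0 < (M *ᵥ zS) i := by
    intro i
    exact lt_of_lt_of_le (mul_pos (by linarith) i.2) (hMzS i)
  have hZM : ∀ (i j : {i : Fin n // 0 < b i}), i ≠ j → M i j ≤ 0 := by
    intro i j hij
    exact hZ i.1 j.1 (fun h => hij (Subtype.ext h))
  -- the vector w
  set w : {i : Fin n // 0 < b i} → ℝ := M⁻¹ *ᵥ bPlus b with hwdef
  have hMw : M *ᵥ w = bPlus b := by
    rw [hwdef, Matrix.mulVec_mulVec, Matrix.mul_nonsing_inv _
      (Matrix.isUnit_iff_isUnit_det M |>.1 hInv), Matrix.one_mulVec]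
  set uS : {i : Fin n // 0 < b i} → ℝ := fun j => y j.1 - ε' * w j with huSdef
  have hMuS : ∀ i, (M *ᵥ uS) i = (M *ᵥ zS) i - ε' * bPlus b i := by
    intro i
    have : uS = zS - ε' • w := by funext j; simp [huSdef, hzSdef]
    rw [this, Matrix.mulVec_sub, Matrix.mulVec_smul, hMw]
    simp
  have hMuSpos : ∀ i, 0 < (M *ᵥ uS) i := by
    intro i
    rw [hMuS i]
    have hbi : 0 < b i.1 := i.2
    have : bPlus b i = b i.1 := rfl
    rw [this]
    nlinarith [hMzS i]
  have huSpos : ∀ j, 0 < uS j :=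
    zmat_pos M hZM zS (fun j => hypos j.1) hMzSpos uS hMuSpos
  -- the vector u on Fin n
  set u : Fin n → ℝ := fun j => if h : 0 < b j then uS ⟨j, h⟩ else y j with hudef
  have hupos : ∀ j, 0 < u j := by
    intro j
    by_cases h : 0 < b j
    · simpa [hudef, h] using huSpos ⟨j, h⟩
    · simpa [hudef, h] using hypos j
  have huS : ∀ (j : Fin n) (h : 0 < b j), u j = y j - ε' * w ⟨j, h⟩ := by
    intro j h; simp [hudef, h, huSdef]
  have huQ : ∀ (j : Fin n), b j = 0 → u j = y j := by
    intro j h; simp [hudef, h]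
  -- key formula for J * u
  have hJu : ∀ i : Fin n, ∑ j, J i j * u j
      = tApp A (cPow y (1/((m - 1 : ℕ) : ℝ))) i - ε' * ∑ j : {i : Fin n // 0 < b i}, J i j.1 * w j := by
    intro i
    rw [sum_split b hb (fun j => J i j * u j)]
    have e1 : ∀ j : {i : Fin n // 0 < b i}, J i j.1 * u j.1
        = J i j.1 * y j.1 - ε' * (J i j.1 * w j) := by
      intro j; rw [huS j.1 j.2]; ring
    have e2 : ∀ j : {i : Fin n // b i = 0}, J i j.1 * u j.1 = J i j.1 * y j.1 := by
      intro j; rw [huQ j.1 j.2]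
    rw [Finset.sum_congr rfl (fun j _ => e1 j), Finset.sum_congr rfl (fun j _ => e2 j),
      Finset.sum_sub_distrib, ← Finset.mul_sum]
    have := hsplit i
    rw [hEuler i] at this
    linarith
  -- negativity witnesses on I₀
  have hneg : ∀ i : Fin n, b i = 0 → ∃ j : Fin n, 0 < b j ∧ J i j < 0 := by
    intro i hbi
    obtain ⟨g, hg, hAg⟩ := hI0 i hbi
    set k₀ : Fin (m - 1) := ⟨0, hq0⟩
    refine ⟨g k₀, hg k₀, ?_⟩
    have hij : i ≠ g k₀ := fun h => by
      have hgk := hg k₀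
      rw [← h, hbi] at hgk
      exact lt_irrefl 0 hgk
    have hident : identT n (m - 1) i g = 0 := by
      rw [identT, if_neg]
      intro hall
      exact hij ((hall k₀).symm)
    have hBig : 0 < B i g := by
      have := hAB i g
      rw [hident, mul_zero, zero_sub] at this
      rcases lt_or_eq_of_le (hB0 i g) with h | h
      · exact h
      · exact absurd (by rw [this, ← h, neg_zero]) hAg
    have hcoef : 0 < coefD (m - 1) y g (g k₀) := coefD_pos hq y hypos g (g k₀) k₀ rfl
    have hNBpos : 0 < NB i (g k₀) := by
      have hle : B i g * coefD (m - 1) y g (g k₀) ≤ NB i (g k₀) := by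
        apply Finset.single_le_sum (f := fun g' => B i g' * coefD (m - 1) y g' (g k₀))
          (fun g' _ => mul_nonneg (hB0 i g') (coefD_nonneg y hypos g' (g k₀)))
          (Finset.mem_univ g)
      nlinarith
    rw [hJs i (g k₀), if_neg hij, mul_zero, zero_sub]
    linarith
  -- I₀ strict negativity of the I₊ block sums
  have hcQ : ∀ i : Fin n, b i = 0 → ∑ j : {i : Fin n // 0 < b i}, J i j.1 * u j.1 < 0 := by
    intro i hbi
    obtain ⟨j₀, hj₀b, hj₀⟩ := hneg i hbi
    have := Finset.sum_lt_sum (f := fun j : {i : Fin n // 0 < b i} => J i j.1 * u j.1)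
      (g := fun _ => (0:ℝ))
      (fun j _ => mul_nonpos_of_nonpos_of_nonneg
        (hZ i j.1 (fun h => by rw [h] at hbi; exact absurd j.2 (by rw [hbi]; simp)))
        (hupos j.1).le)
      ⟨⟨j₀, hj₀b⟩, Finset.mem_univ _, mul_neg_of_neg_of_pos hj₀ (hupos j₀)⟩
    simpa using this
  -- choice of β
  set φ : {i : Fin n // 0 < b i} → ℝ := fun i =>
    min (1/2) ((ε - ε') * b i.1 /
      (2 * (1 + |∑ j : {i : Fin n // 0 < b i}, J i.1 j.1 * u j.1|))) with hφdef
  have hφpos : ∀ i, 0 < φ i := by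
    intro i
    apply lt_min (by norm_num)
    have h1 : 0 < (ε - ε') * b i.1 := by nlinarith [i.2]
    positivity
  set β : ℝ := Finset.univ.inf' Finset.univ_nonempty φ with hβdef
  have hβpos : 0 < β := by
    rw [hβdef, Finset.lt_inf'_iff]
    exact fun i _ => hφpos i
  have hβle : ∀ i, β ≤ φ i := fun i => Finset.inf'_le φ (Finset.mem_univ i)
  have hβ1 : β < 1 := by
    obtain ⟨i⟩ := hSne
    have := hβle i
    have := min_le_left (1/2 : ℝ) ((ε - ε') * b i.1 /
      (2 * (1 + |∑ j : {i : Fin n // 0 < b i}, J i.1 j.1 * u j.1|)))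
    rw [hφdef] at *
    linarith
  -- the final positive vector x
  set x : Fin n → ℝ := fun j => if 0 < b j then (1 - β) * u j else u j with hxdef
  have hxpos : ∀ j, 0 < x j := by
    intro j
    by_cases h : 0 < b j
    · simp only [hxdef, if_pos h]
      exact mul_pos (by linarith) (hupos j)
    · simp only [hxdef, if_neg h]
      exact hupos j
  have hJx : ∀ i, ∑ j, J i j * x j
      = ∑ j, J i j * u j - β * ∑ j : {i : Fin n // 0 < b i}, J i j.1 * u j.1 := by
    intro i
    have ex : ∀ j, J i j * x j = J i j * u j
        - (if 0 < b j then β * (J i j * u j) else 0) := by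
      intro j
      by_cases h : 0 < b j
      · simp only [hxdef, if_pos h]; ring
      · simp only [hxdef, if_neg h]; ring
    rw [Finset.sum_congr rfl (fun j _ => ex j), Finset.sum_sub_distrib]
    congr 1
    rw [sum_split b hb (fun j => if 0 < b j then β * (J i j * u j) else 0)]
    have e1 : ∀ j : {i : Fin n // 0 < b i},
        (if 0 < b j.1 then β * (J i j.1 * u j.1) else 0) = β * (J i j.1 * u j.1) := by
      intro j; rw [if_pos j.2]
    have e2 : ∀ j : {i : Fin n // b i = 0},
        (if 0 < b j.1 then β * (J i j.1 * u j.1) else 0) = 0 := by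
      intro j; rw [if_neg (by rw [j.2]; simp)]
    rw [Finset.sum_congr rfl (fun j _ => e1 j), Finset.sum_congr rfl (fun j _ => e2 j)]
    rw [Finset.sum_const, smul_zero, add_zero, ← Finset.mul_sum]
  -- positivity of J * x
  have hJxpos : ∀ i, 0 < ∑ j, J i j * x j := by
    intro i
    rcases (hb i).lt_or_eq with hbi | hbi
    · -- i ∈ I₊
      have hw : ∑ j : {i : Fin n // 0 < b i}, J i j.1 * w j = b i := by
        have : (M *ᵥ w) ⟨i, hbi⟩ = b i := by rw [hMw]; rfl
        rw [← this]; rfl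
      have hT := hJu i
      rw [hw] at hT
      set T := ∑ j : {i : Fin n // 0 < b i}, J ( ⟨i, hbi⟩ : {i : Fin n // 0 < b i}).1 j.1 * u j.1 with hTdef
      have hβT : β * T < (ε - ε') * b i := by
        have ha : (0:ℝ) ≤ |T| := abs_nonneg T
        have hd : 0 < (ε - ε') * b i := by nlinarith
        have hb1 : β ≤ (ε - ε') * b i / (2 * (1 + |T|)) := by
          have := hβle ⟨i, hbi⟩
          rw [hφdef] at this
          exact le_trans this (min_le_right _ _)
        have h1 : β * T ≤ β * |T| := mul_le_mul_of_nonneg_left (le_abs_self T) hβpos.le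
        have h2 : β * |T| ≤ ((ε - ε') * b i / (2 * (1 + |T|))) * |T| :=
          mul_le_mul_of_nonneg_right hb1 ha
        have h3 : ((ε - ε') * b i / (2 * (1 + |T|))) * |T| < (ε - ε') * b i := by
          rw [div_mul_eq_mul_div, div_lt_iff₀ (by positivity)]
          nlinarith
        linarith
      rw [hJx i, hT]
      have hFi := hF1 i hbi
      have : (T : ℝ) = ∑ j : {i : Fin n // 0 < b i}, J i j.1 * u j.1 := rfl
      rw [← this]
      nlinarith
    · -- i ∈ I₀
      have hF2i := hF2 ⟨i, hbi.symm⟩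
      have hw : (subMat J (fun i => b i = 0) (fun i => 0 < b i) *ᵥ
          (M⁻¹ *ᵥ bPlus b)) (⟨i, hbi.symm⟩ : {i : Fin n // b i = 0})
          = ∑ j : {i : Fin n // 0 < b i}, J i j.1 * w j := rfl
      have hJui : 0 ≤ ∑ j, J i j * u j := by
        rw [hJu i]
        rw [hw] at hF2i
        linarith
      have hc := hcQ i hbi.symm
      rw [hJx i]
      nlinarith
  -- conclusion
  refine ⟨hZ, s, NB, hNB0, ?_, ?_⟩
  · ext i j
    rw [Matrix.sub_apply, Matrix.smul_apply, Matrix.one_apply, smul_eq_mul, hJs i j]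
  · apply spec_bound NB s hNB0 x hxpos
    intro i
    have h := hJxpos i
    have e : ∑ j, J i j * x j = s * x i - (NB *ᵥ x) i := by
      have : ∀ j, J i j * x j = (if i = j then s * x j else 0) - NB i j * x j := by
        intro j
        rw [hJs i j]
        by_cases h : i = j
        · rw [if_pos h, if_pos h]; ring
        · rw [if_neg h, if_neg h]; ring
      rw [Finset.sum_congr rfl (fun j _ => this j), Finset.sum_sub_distrib,
        Finset.sum_ite_eq, if_pos (Finset.mem_univ i)]
      rfl
    rw [e] at h
    linarith
end
end

section
/- Let m ≥ 2, let A be an mth-order n-dimensional strong M-tensor, and let b ∈ ℝⁿ. Then for every β ∈ ℝ, the level set Ω_β = {x ∈ ℝⁿ : ‖A x^{m−1} − b‖ ≤ β} is bounded, where ‖·‖ is the Euclidean norm. -/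
open Finset Matrix Filter Topology

noncomputable section

lemma tApp_identT {n q : ℕ} (x : Fin n → ℝ) (i : Fin n) :
    tApp (identT n q) x i = x i ^ q := by
  unfold tApp identT
  rw [Finset.sum_eq_single (fun _ => i)]
  · simp
  · intro g _ hg
    rw [if_neg, zero_mul]
    intro h
    exact hg (funext h)
  · simp

theorem level_set_bounded {m n : ℕ} (hm : 2 ≤ m)
    (A : Fin n → (Fin (m - 1) → Fin n) → ℝ) (hM : IsStrongMTensor A)
    (b : Fin n → ℝ) :
    ∀ β : ℝ, ∃ C : ℝ, ∀ x : Fin n → ℝ,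
      enorm2 (fun i => tApp A x i - b i) ≤ β → enorm2 x ≤ C := by
  intro β
  have hq1 : 1 ≤ m - 1 := by omega
  -- trivial case n = 0
  rcases Nat.eq_zero_or_pos n with hn | hn
  · subst hn
    refine ⟨0, fun x _ => ?_⟩
    simp [enorm2]
  -- nonvanishing of F on nonzero vectors
  have hF0 : ∀ x : Fin n → ℝ, x ≠ 0 → (fun i => tApp A x i) ≠ 0 := by
    intro x hx hFx
    obtain ⟨s, B, hB0, hAB, hspec⟩ := hM
    have hBx : ∀ i, tApp B x i = s * x i ^ (m - 1) := by
      intro i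
      have h1 : tApp A x i = s * tApp (identT n (m - 1)) x i - tApp B x i := by
        simp only [tApp, hAB, sub_mul, Finset.sum_sub_distrib, Finset.mul_sum, mul_assoc]
      have h2 : tApp A x i = 0 := congrFun hFx i
      have h3 := tApp_identT (q := m - 1) x i
      have := h1 ▸ h2
      linarith [h3 ▸ this]
    have heig : IsTensorEigenvalue B ((s : ℝ) : ℂ) := by
      refine ⟨fun i => (x i : ℂ), ?_, ?_⟩
      · intro h
        apply hx
        funext i
        have : (x i : ℂ) = 0 := by simpa using congrFun h i
        exact_mod_cast this
      · intro i
        have : tAppC B (fun i => (x i : ℂ)) i = ((tApp B x i : ℝ) : ℂ) := by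
          simp [tAppC, tApp]
        rw [this, hBx i]
        push_cast
        ring
    have := hspec _ heig
    rw [Complex.norm_real, Real.norm_eq_abs] at this
    exact absurd this (not_lt.2 (le_abs_self s))
  -- identify enorm2 with the Euclidean norm
  set e : (Fin n → ℝ) ≃L[ℝ] EuclideanSpace ℝ (Fin n) := (EuclideanSpace.equiv (Fin n) ℝ).symm
    with he
  have henorm : ∀ x : Fin n → ℝ, enorm2 x = ‖e x‖ := by
    intro x
    rw [EuclideanSpace.norm_eq]
    simp [enorm2, sq_abs]
    rfl
  -- continuity of x ↦ enorm2 (F x)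
  have hFc : Continuous fun x : Fin n → ℝ => (fun i => tApp A x i) := by
    apply continuous_pi
    intro i
    apply continuous_finset_sum
    intro g _
    exact continuous_const.mul (continuous_finset_prod _ fun j _ => continuous_apply _)
  have hcont : Continuous fun x : Fin n → ℝ => enorm2 (fun i => tApp A x i) := by
    simp only [henorm]
    exact (e.continuous.comp hFc).norm
  -- the unit sphere of enorm2 is compact and nonempty
  set S : Set (Fin n → ℝ) := {x | enorm2 x = 1} with hS
  have hScompact : IsCompact S := by
    have : S = (EuclideanSpace.equiv (Fin n) ℝ) '' Metric.sphere 0 1 := by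
      ext x
      constructor
      · intro hx
        refine ⟨e x, ?_, by simp [he]; rfl⟩
        simp only [Metric.mem_sphere, dist_zero_right]
        rw [← henorm x]; exact hx
      · rintro ⟨y, hy, rfl⟩
        simp only [Metric.mem_sphere, dist_zero_right] at hy
        show enorm2 _ = 1
        rw [henorm]
        simpa [he] using hy
    rw [this]
    exact (isCompact_sphere 0 1).image (EuclideanSpace.equiv (Fin n) ℝ).continuous
  have hSne : S.Nonempty := by
    refine ⟨Pi.single ⟨0, hn⟩ 1, ?_⟩
    show enorm2 _ = 1
    unfold enorm2
    rw [Finset.sum_eq_single (⟨0, hn⟩ : Fin n)]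
    · simp
    · intro j _ hj; simp [Pi.single_eq_of_ne hj]
    · simp
  -- minimum of enorm2 ∘ F on the sphere is positive
  obtain ⟨u, huS, humin⟩ := hScompact.exists_isMinOn hSne hcont.continuousOn
  set c : ℝ := enorm2 (fun i => tApp A u i) with hc
  have hcpos : 0 < c := by
    have hu0 : u ≠ 0 := by
      intro h
      rw [hS] at huS
      simp only [Set.mem_setOf_eq, h] at huS
      rw [henorm] at huS
      simp at huS
    rw [hc, henorm]
    rw [norm_pos_iff]
    intro h
    exact hF0 u hu0 (by
      have := e.injective (by simpa using h)
      simpa using this)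
  refine ⟨max 1 ((β + enorm2 b) / c), fun x hx => ?_⟩
  by_cases hx0 : x = 0
  · subst hx0
    have : enorm2 (0 : Fin n → ℝ) = 0 := by rw [henorm]; simp
    rw [this]
    exact le_trans zero_le_one (le_max_left _ _)
  -- scaling
  set r : ℝ := enorm2 x with hr
  have hrpos : 0 < r := by
    rw [hr, henorm, norm_pos_iff]
    intro h
    exact hx0 (e.injective (by simpa using h))
  set w : Fin n → ℝ := r⁻¹ • x with hw
  have hwS : w ∈ S := by
    show enorm2 w = 1
    rw [henorm, hw, _root_.map_smul e, norm_smul, ← henorm, ← hr]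
    rw [Real.norm_eq_abs, abs_of_pos (inv_pos.2 hrpos)]
    field_simp
  have hhom : ∀ i, tApp A x i = r ^ (m - 1) * tApp A w i := by
    intro i
    have hxw : x = r • w := by
      rw [hw, smul_smul]
      field_simp
      rw [one_smul]
    rw [hxw]
    simp only [tApp, Finset.mul_sum]
    congr 1
    funext g
    rw [Finset.prod_congr rfl (fun j _ => by simp [Pi.smul_apply, smul_eq_mul] : ∀ j ∈ Finset.univ, (r • w) (g j) = r * w (g j))]
    rw [Finset.prod_mul_distrib, Finset.prod_const]
    simp [Finset.card_univ]
    ring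
  have hFscale : enorm2 (fun i => tApp A x i) = r ^ (m - 1) * enorm2 (fun i => tApp A w i) := by
    have h1 : (fun i => tApp A x i) = (r ^ (m - 1)) • (fun i => tApp A w i) := by
      funext i; simp [hhom i]
    rw [h1, henorm, _root_.map_smul e, norm_smul, Real.norm_eq_abs,
      abs_of_pos (pow_pos hrpos (m - 1)), ← henorm]
  -- lower bound via min on sphere
  have hmin : c ≤ enorm2 (fun i => tApp A w i) := humin hwS
  -- triangle inequality
  have htri : enorm2 (fun i => tApp A x i) ≤ β + enorm2 b := by
    have h1 : enorm2 (fun i => tApp A x i) ≤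
        enorm2 (fun i => tApp A x i - b i) + enorm2 b := by
      rw [henorm, henorm, henorm]
      have : e (fun i => tApp A x i) =
          e (fun i => tApp A x i - b i) + e b := by
        rw [← map_add]
        congr 1
        funext i
        simp
      rw [this]
      exact norm_add_le _ _
    linarith
  have hkey : c * r ^ (m - 1) ≤ β + enorm2 b := by
    calc c * r ^ (m - 1) ≤ enorm2 (fun i => tApp A w i) * r ^ (m - 1) :=
          mul_le_mul_of_nonneg_right hmin (le_of_lt (pow_pos hrpos (m - 1)))
      _ = enorm2 (fun i => tApp A x i) := by rw [hFscale]; ring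
      _ ≤ β + enorm2 b := htri
  -- conclude
  rcases le_or_gt r 1 with h1 | h1
  · exact le_trans h1 (le_max_left _ _)
  · have hrq : r ≤ r ^ (m - 1) := le_self_pow₀ (le_of_lt h1) (by omega)
    have : c * r ≤ β + enorm2 b :=
      le_trans (mul_le_mul_of_nonneg_left hrq (le_of_lt hcpos)) hkey
    have : r ≤ (β + enorm2 b) / c := (le_div_iff₀' hcpos).2 this
    exact le_trans this (le_max_right _ _)
end
end

section
/- Let m ≥ 3, let A be a semi-symmetric strong M-tensor of order m and dimension n, and let b ∈ ℝⁿ with b > 0. Suppose sequences (y_k), (d_k), (α_k) are generated by Newton's method (Algorithm 2.4) with parameters ε ∈ (0,1), σ ∈ (0,1/2), ρ ∈ (0,1), starting from y₀ ∈ F_ε, and the method never terminates. Then the sequences (y_k) and (d_k) are bounded, and there exists a constant ᾱ > 0 such that y_k + α d_k ∈ F_ε for every k and every α ∈ (0, ᾱ). -/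
open Finset Matrix Filter Topology

noncomputable section

section AuxNewton

open Finset Matrix

variable {n q : ℕ}

/-- `P_g(y) = ∏_j y_{g j}^{1/q}`. -/
def Pbig (q : ℕ) {n : ℕ} (y : Fin n → ℝ) (g : Fin q → Fin n) : ℝ :=
  ∏ j, y (g j) ^ (1 / (q : ℝ))

lemma Pbig_nonneg {y : Fin n → ℝ} (hy : ∀ i, 0 ≤ y i) (g : Fin q → Fin n) :
    0 ≤ Pbig q y g :=
  Finset.prod_nonneg fun _ _ => Real.rpow_nonneg (hy _) _

lemma Pbig_pos {y : Fin n → ℝ} (hy : ∀ i, 0 < y i) (g : Fin q → Fin n) :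
    0 < Pbig q y g :=
  Finset.prod_pos fun _ _ => Real.rpow_pos_of_pos (hy _) _

lemma Pbig_const (hq : q ≠ 0) {y : Fin n → ℝ} {i : Fin n} (hy : 0 < y i) :
    Pbig q y (fun _ => i) = y i := by
  have hq' : ((q : ℝ)) ≠ 0 := Nat.cast_ne_zero.mpr hq
  rw [Pbig, Finset.prod_const, Finset.card_univ, Fintype.card_fin,
    ← Real.rpow_natCast (y i ^ (1 / (q : ℝ))) q, ← Real.rpow_mul hy.le,
    one_div_mul_cancel hq', Real.rpow_one]

lemma Pbig_le_scale (hq : q ≠ 0) {t : ℝ} (ht : 0 < t) {x y : Fin n → ℝ}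
    (hy : ∀ i, 0 < y i) (hx : ∀ i, 0 ≤ x i) (hle : ∀ i, x i ≤ t * y i)
    (g : Fin q → Fin n) : Pbig q x g ≤ t * Pbig q y g := by
  have hq' : ((q : ℝ)) ≠ 0 := Nat.cast_ne_zero.mpr hq
  have h1 : Pbig q x g ≤ ∏ j, (t * y (g j)) ^ (1 / (q : ℝ)) := by
    refine Finset.prod_le_prod (fun j _ => Real.rpow_nonneg (hx _) _) fun j _ => ?_
    exact Real.rpow_le_rpow (hx _) (hle _) (by positivity)
  have h2 : ∏ j, (t * y (g j)) ^ (1 / (q : ℝ)) = t * Pbig q y g := by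
    have : ∀ j : Fin q, (t * y (g j)) ^ (1 / (q : ℝ))
        = t ^ (1 / (q : ℝ)) * y (g j) ^ (1 / (q : ℝ)) := fun j =>
      Real.mul_rpow ht.le (hy _).le
    rw [Finset.prod_congr rfl fun j _ => this j, Finset.prod_mul_distrib, Pbig,
      Finset.prod_const, Finset.card_univ, Fintype.card_fin,
      ← Real.rpow_natCast (t ^ (1 / (q : ℝ))) q, ← Real.rpow_mul ht.le,
      one_div_mul_cancel hq', Real.rpow_one]
  linarith

lemma tApp_eq_sum_Pbig (A : Fin n → (Fin q → Fin n) → ℝ) (y : Fin n → ℝ) (i : Fin n) :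
    tApp A (cPow y (1 / (q : ℝ))) i = ∑ g, A i g * Pbig q y g := rfl

lemma hasFDerivAt_Pbig (hq : q ≠ 0) {y : Fin n → ℝ} (hy : ∀ i, 0 < y i)
    (g : Fin q → Fin n) :
    HasFDerivAt (fun z : Fin n → ℝ => Pbig q z g)
      (∑ j, ((1 / (q : ℝ)) * Pbig q y g / y (g j)) •
        (ContinuousLinearMap.proj (g j) : (Fin n → ℝ) →L[ℝ] ℝ)) y := by
  have h := HasFDerivAt.finset_prod (u := Finset.univ)
    (g := fun (j : Fin q) (z : Fin n → ℝ) => z (g j) ^ (1 / (q : ℝ)))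
    (g' := fun j => ((1 / (q : ℝ)) * (y (g j)) ^ ((1 / (q : ℝ)) - 1)) •
      (ContinuousLinearMap.proj (g j) : (Fin n → ℝ) →L[ℝ] ℝ))
    (x := y)
    (fun j _ => by
      have h1 : HasDerivAt (fun t : ℝ => t ^ (1 / (q : ℝ)))
          ((1 / (q : ℝ)) * (y (g j)) ^ ((1 / (q : ℝ)) - 1)) (y (g j)) :=
        Real.hasDerivAt_rpow_const (Or.inl (hy (g j)).ne')
      exact h1.comp_hasFDerivAt y
        ((ContinuousLinearMap.proj (g j) : (Fin n → ℝ) →L[ℝ] ℝ).hasFDerivAt))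
  refine h.congr_fderiv ?_
  refine Finset.sum_congr rfl fun j _ => ?_
  rw [smul_smul]
  congr 1
  have hyj := hy (g j)
  rw [Real.rpow_sub hyj, Real.rpow_one, Pbig,
    ← Finset.prod_erase_mul Finset.univ (fun k => y (g k) ^ (1 / (q : ℝ)))
      (Finset.mem_univ j)]
  field_simp

lemma hasFDerivAt_fres (A : Fin n → (Fin q → Fin n) → ℝ) (b : Fin n → ℝ)
    (hq : q ≠ 0) {y : Fin n → ℝ} (hy : ∀ i, 0 < y i) (i : Fin n) :
    HasFDerivAt (fun z => fres A b z i)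
      (∑ g, A i g • ∑ j, ((1 / (q : ℝ)) * Pbig q y g / y (g j)) •
        (ContinuousLinearMap.proj (g j) : (Fin n → ℝ) →L[ℝ] ℝ)) y := by
  have : (fun z => fres A b z i) = fun z => (∑ g, A i g * Pbig q z g) - b i := rfl
  rw [this]
  exact (HasFDerivAt.fun_sum fun g _ =>
    ((hasFDerivAt_Pbig hq hy g).const_mul (A i g))).sub_const (b i)

/-- The explicit Jacobian matrix of `fres` at a positive point. -/
def Jex (A : Fin n → (Fin q → Fin n) → ℝ) (y : Fin n → ℝ) : Matrix (Fin n) (Fin n) ℝ :=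
  Matrix.of fun i l =>
    ∑ g, A i g * ∑ j, if g j = l then (1 / (q : ℝ)) * Pbig q y g / y l else 0

lemma jacM_fres_eq (A : Fin n → (Fin q → Fin n) → ℝ) (b : Fin n → ℝ)
    (hq : q ≠ 0) {y : Fin n → ℝ} (hy : ∀ i, 0 < y i) :
    jacM (fres A b) y = Jex A y := by
  ext i l
  have hD := hasFDerivAt_fres A b hq hy i
  show fderiv ℝ (fun z => fres A b z i) y (Pi.single l 1) = _
  rw [hD.fderiv]
  simp only [ContinuousLinearMap.coe_sum', Finset.sum_apply,
    ContinuousLinearMap.coe_smul', Pi.smul_apply, ContinuousLinearMap.proj_apply,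
    Jex, Matrix.of_apply, smul_eq_mul]
  refine Finset.sum_congr rfl fun g _ => ?_
  congr 1
  refine Finset.sum_congr rfl fun j _ => ?_
  by_cases h : g j = l
  · subst h; simp
  · simp [h, Pi.single_apply]

lemma Jex_mulVec (A : Fin n → (Fin q → Fin n) → ℝ) {y : Fin n → ℝ}
    (hy : ∀ i, 0 < y i) (v : Fin n → ℝ) (i : Fin n) :
    (Jex A y *ᵥ v) i
      = ∑ g, A i g * ((1 / (q : ℝ)) * Pbig q y g * ∑ j, v (g j) / y (g j)) := by
  simp only [Matrix.mulVec, dotProduct, Jex, Matrix.of_apply]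
  have step : ∀ l, (∑ g, A i g *
        ∑ j, if g j = l then (1 / (q : ℝ)) * Pbig q y g / y l else 0) * v l
      = ∑ g, A i g *
        ∑ j, if g j = l then (1 / (q : ℝ)) * Pbig q y g / y (g j) * v (g j) else 0 := by
    intro l
    rw [Finset.sum_mul]
    refine Finset.sum_congr rfl fun g _ => ?_
    rw [mul_assoc, Finset.sum_mul]
    congr 1
    refine Finset.sum_congr rfl fun j _ => ?_
    by_cases h : g j = l
    · subst h; simp
    · simp [h]
  rw [Finset.sum_congr rfl fun l _ => step l, Finset.sum_comm]
  refine Finset.sum_congr rfl fun g _ => ?_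
  rw [← Finset.mul_sum]
  congr 1
  rw [Finset.sum_comm]
  rw [Finset.mul_sum]
  refine Finset.sum_congr rfl fun j _ => ?_
  rw [Finset.sum_ite_eq Finset.univ (g j)
    (fun l => (1 / (q : ℝ)) * Pbig q y g / y (g j) * v (g j))]
  simp [Finset.mem_univ]
  ring

lemma Jex_mulVec_self (A : Fin n → (Fin q → Fin n) → ℝ) (hq : q ≠ 0)
    {y : Fin n → ℝ} (hy : ∀ i, 0 < y i) (i : Fin n) :
    (Jex A y *ᵥ y) i = ∑ g, A i g * Pbig q y g := by
  have hq' : ((q : ℝ)) ≠ 0 := Nat.cast_ne_zero.mpr hq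
  rw [Jex_mulVec A hy y i]
  refine Finset.sum_congr rfl fun g _ => ?_
  have : ∀ j : Fin q, y (g j) / y (g j) = 1 := fun j => div_self (hy (g j)).ne'
  rw [Finset.sum_congr rfl fun j _ => this j]
  simp [Finset.card_univ]
  exact Or.inl (by field_simp)

lemma Jex_offdiag (A : Fin n → (Fin q → Fin n) → ℝ)
    (hZ : ∀ i g, ¬(∀ j, g j = i) → A i g ≤ 0) {y : Fin n → ℝ}
    (hy : ∀ i, 0 < y i) {i l : Fin n} (hil : i ≠ l) : Jex A y i l ≤ 0 := by
  refine Finset.sum_nonpos fun g _ => ?_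
  by_cases hg : ∃ j, g j = l
  · have hA : A i g ≤ 0 := by
      refine hZ i g fun hall => ?_
      obtain ⟨j, hj⟩ := hg
      exact hil ((hall j).symm.trans hj)
    refine mul_nonpos_of_nonpos_of_nonneg hA (Finset.sum_nonneg fun j _ => ?_)
    by_cases h : g j = l
    · rw [if_pos h]
      have hP := Pbig_nonneg (fun i => (hy i).le) g
      exact div_nonneg (mul_nonneg (by positivity) hP) (hy l).le
    · rw [if_neg h]
  · have : (∑ j, if g j = l then (1 / (q : ℝ)) * Pbig q y g / y l else 0) = 0 :=
      Finset.sum_eq_zero fun j _ => if_neg fun h => hg ⟨j, h⟩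
    rw [this, mul_zero]

lemma amgm_Pbig (hq : q ≠ 0) {y y' : Fin n → ℝ} (hy : ∀ i, 0 < y i)
    (hy' : ∀ i, 0 < y' i) (g : Fin q → Fin n) :
    Pbig q y' g ≤ (1 / (q : ℝ)) * Pbig q y g * ∑ j, y' (g j) / y (g j) := by
  have hq' : ((q : ℝ)) ≠ 0 := Nat.cast_ne_zero.mpr hq
  have hAM := Real.geom_mean_le_arith_mean_weighted Finset.univ
    (fun _ : Fin q => 1 / (q : ℝ)) (fun j => y' (g j) / y (g j))
    (fun _ _ => one_div_nonneg.mpr (Nat.cast_nonneg q))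
    (by simp [Finset.card_univ]; field_simp)
    (fun j _ => (div_pos (hy' (g j)) (hy (g j))).le)
  have key : Pbig q y' g = Pbig q y g * ∏ j, (y' (g j) / y (g j)) ^ (1 / (q : ℝ)) := by
    rw [Pbig, Pbig, ← Finset.prod_mul_distrib]
    refine Finset.prod_congr rfl fun j _ => ?_
    rw [← Real.mul_rpow (hy _).le (div_pos (hy' _) (hy _)).le]
    congr 1
    rw [eq_comm, mul_comm, div_mul_cancel₀ _ (hy (g j)).ne']
  calc Pbig q y' g = Pbig q y g * ∏ j, (y' (g j) / y (g j)) ^ (1 / (q : ℝ)) := key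
    _ ≤ Pbig q y g * ∑ j, (1 / (q : ℝ)) * (y' (g j) / y (g j)) :=
        mul_le_mul_of_nonneg_left hAM (Pbig_nonneg (fun i => (hy i).le) g)
    _ = (1 / (q : ℝ)) * Pbig q y g * ∑ j, y' (g j) / y (g j) := by
        rw [← Finset.mul_sum]; ring

lemma tangent_ineq (A : Fin n → (Fin q → Fin n) → ℝ) (hq : q ≠ 0)
    (hZ : ∀ i g, ¬(∀ j, g j = i) → A i g ≤ 0) {y y' : Fin n → ℝ}
    (hy : ∀ i, 0 < y i) (hy' : ∀ i, 0 < y' i) (i : Fin n) :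
    (∑ g, A i g * Pbig q y g) + (Jex A y *ᵥ (y' - y)) i
      ≤ ∑ g, A i g * Pbig q y' g := by
  have hq' : ((q : ℝ)) ≠ 0 := Nat.cast_ne_zero.mpr hq
  rw [Jex_mulVec A hy (y' - y) i, ← Finset.sum_add_distrib]
  refine Finset.sum_le_sum fun g _ => ?_
  have hsub : ∑ j, (y' - y) (g j) / y (g j) = (∑ j, y' (g j) / y (g j)) - q := by
    have : ∀ j : Fin q, (y' - y) (g j) / y (g j)
        = y' (g j) / y (g j) - 1 := fun j => by
      rw [Pi.sub_apply, sub_div, div_self (hy (g j)).ne']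
    rw [Finset.sum_congr rfl fun j _ => this j, Finset.sum_sub_distrib]
    simp [Finset.card_univ]
  rw [hsub]
  by_cases hg : ∀ j, g j = i
  · have hgc : g = fun _ => i := funext hg
    subst hgc
    rw [Pbig_const hq (hy i), Pbig_const hq (hy' i)]
    have hsum : (∑ _j : Fin q, y' i / y i) = (q : ℝ) * (y' i / y i) := by
      rw [Finset.sum_const, Finset.card_univ, Fintype.card_fin, nsmul_eq_mul]
    rw [hsum]
    have hyi := (hy i).ne'
    have e : 1 / (q : ℝ) * y i * ((q : ℝ) * (y' i / y i) - (q : ℝ)) = y' i - y i := by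
      field_simp
    rw [e]
    have : A i (fun _ => i) * y i + A i (fun _ => i) * (y' i - y i)
        = A i (fun _ => i) * y' i := by ring
    linarith
  · have hA := hZ i g hg
    have hAM := amgm_Pbig hq hy hy' g
    have e : A i g * Pbig q y g
          + A i g * (1 / (q : ℝ) * Pbig q y g * ((∑ j, y' (g j) / y (g j)) - (q : ℝ)))
        = A i g * (1 / (q : ℝ) * Pbig q y g * ∑ j, y' (g j) / y (g j)) := by
      field_simp
      ring
    rw [e]
    exact mul_le_mul_of_nonpos_left hAM hA

lemma zcomp {n : ℕ} (M : Matrix (Fin n) (Fin n) ℝ) (y v : Fin n → ℝ)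
    (hy : ∀ i, 0 < y i) (hoff : ∀ i l, i ≠ l → M i l ≤ 0)
    (hMy : ∀ i, 0 < (M *ᵥ y) i) (hMv : ∀ i, 0 ≤ (M *ᵥ v) i) :
    ∀ i, 0 ≤ v i := by
  intro i0
  have hne : (Finset.univ : Finset (Fin n)).Nonempty := ⟨i0, Finset.mem_univ i0⟩
  obtain ⟨i, -, hi⟩ := Finset.exists_min_image Finset.univ (fun i => v i / y i) hne
  set t := v i / y i with ht
  have hvl : ∀ l, t * y l ≤ v l := fun l => by
    have := hi l (Finset.mem_univ l)
    calc t * y l ≤ (v l / y l) * y l :=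
          mul_le_mul_of_nonneg_right this (hy l).le
      _ = v l := div_mul_cancel₀ _ (hy l).ne'
  by_cases htn : 0 ≤ t
  · have : t * y i0 ≤ v i0 := hvl i0
    nlinarith [hy i0, mul_nonneg htn (hy i0).le]
  · push_neg at htn
    exfalso
    have hvi : v i = t * y i := (div_mul_cancel₀ _ (hy i).ne').symm
    have hle : (M *ᵥ v) i ≤ t * (M *ᵥ y) i := by
      show dotProduct (M i) v ≤ t * dotProduct (M i) y
      rw [dotProduct, dotProduct, Finset.mul_sum]
      refine Finset.sum_le_sum fun l _ => ?_
      by_cases hl : l = i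
      · subst hl; rw [hvi]; ring_nf; exact le_refl _
      · have hM := hoff i l (Ne.symm hl)
        calc M i l * v l ≤ M i l * (t * y l) :=
              mul_le_mul_of_nonpos_left (hvl l) hM
          _ = t * (M i l * y l) := by ring
    have : t * (M *ᵥ y) i < 0 := mul_neg_of_neg_of_pos htn (hMy i)
    exact absurd (le_trans (hMv i) hle) (not_le.mpr this)

lemma enorm2_nonneg {n : ℕ} (x : Fin n → ℝ) : 0 ≤ enorm2 x := Real.sqrt_nonneg _

lemma sq_enorm2 {n : ℕ} (x : Fin n → ℝ) : enorm2 x ^ 2 = ∑ i, x i ^ 2 :=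
  Real.sq_sqrt (Finset.sum_nonneg fun i _ => sq_nonneg _)

lemma abs_le_enorm2 {n : ℕ} (x : Fin n → ℝ) (i : Fin n) : |x i| ≤ enorm2 x := by
  rw [enorm2, ← Real.sqrt_sq_eq_abs]
  exact Real.sqrt_le_sqrt (Finset.single_le_sum
    (f := fun i => x i ^ 2) (fun i _ => sq_nonneg _) (Finset.mem_univ i))

lemma enorm2_le_enorm2 {n : ℕ} {x z : Fin n → ℝ} (h : ∀ i, x i ^ 2 ≤ z i ^ 2) :
    enorm2 x ≤ enorm2 z :=
  Real.sqrt_le_sqrt (Finset.sum_le_sum fun i _ => h i)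

lemma sum_decomp {n q : ℕ} (A B : Fin n → (Fin q → Fin n) → ℝ) {s : ℝ}
    (hAB : ∀ i g, A i g = s * identT n q i g - B i g) (hq : q ≠ 0)
    {y : Fin n → ℝ} (hy : ∀ i, 0 < y i) (i : Fin n) :
    ∑ g, A i g * Pbig q y g = s * y i - ∑ g, B i g * Pbig q y g := by
  have h1 : ∀ g : Fin q → Fin n, A i g * Pbig q y g
      = s * (identT n q i g * Pbig q y g) - B i g * Pbig q y g := by
    intro g; rw [hAB i g]; ring
  rw [Finset.sum_congr rfl fun g _ => h1 g, Finset.sum_sub_distrib, ← Finset.mul_sum]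
  congr 2
  have h2 : ∀ g : Fin q → Fin n, identT n q i g * Pbig q y g
      = if g = (fun _ => i) then Pbig q y g else 0 := by
    intro g
    by_cases h : ∀ j, g j = i
    · rw [if_pos (funext h), identT, if_pos h, one_mul]
    · rw [identT, if_neg h, zero_mul, if_neg]
      intro he
      exact h fun j => congrFun he j
  rw [Finset.sum_congr rfl fun g _ => h2 g,
    Finset.sum_ite_eq' Finset.univ (fun _ => i) (Pbig q y)]
  rw [if_pos (Finset.mem_univ _), Pbig_const hq (hy i)]

end AuxNewton


theorem newton_iterates_bounded_and_uniform_steplength {m n : ℕ} (hm : 3 ≤ m)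
    (A : Fin n → (Fin (m - 1) → Fin n) → ℝ)
    (hsym : IsSemiSymmetric A) (hM : IsStrongMTensor A)
    (b : Fin n → ℝ) (hb : ∀ i, 0 < b i)
    (ε σ ρ : ℝ) (hε0 : 0 < ε) (hε1 : ε < 1) (hσ0 : 0 < σ) (hσ1 : σ < 1 / 2)
    (hρ0 : 0 < ρ) (hρ1 : ρ < 1)
    (y d : ℕ → Fin n → ℝ) (α : ℕ → ℝ)
    (halg : NewtonIter A b (FSet A b ε) σ ρ y d α) :
    (∃ C : ℝ, ∀ k : ℕ, enorm2 (y k) ≤ C) ∧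
    (∃ C : ℝ, ∀ k : ℕ, enorm2 (d k) ≤ C) ∧
    ∃ abar : ℝ, 0 < abar ∧ ∀ k : ℕ, ∀ a : ℝ, 0 < a → a < abar →
      y k + a • d k ∈ FSet A b ε := by
  rcases Nat.eq_zero_or_pos n with hn | hn
  · subst hn
    refine ⟨⟨0, fun k => ?_⟩, ⟨0, fun k => ?_⟩, 1, one_pos, fun k a _ _ => ?_⟩
    · simp [enorm2]
    · simp [enorm2]
    · exact ⟨fun i => i.elim0, fun i => i.elim0⟩
  haveI : Nonempty (Fin n) := Fin.pos_iff_nonempty.mp hn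
  have hne : (Finset.univ : Finset (Fin n)).Nonempty := Finset.univ_nonempty
  obtain ⟨s, B, hB0, hAB, -⟩ := hM
  have hq : m - 1 ≠ 0 := by omega
  have hq' : ((m - 1 : ℕ) : ℝ) ≠ 0 := Nat.cast_ne_zero.mpr hq
  obtain ⟨hy0F, hstep⟩ := halg
  have hZ : ∀ i g, ¬(∀ j, g j = i) → A i g ≤ 0 := by
    intro i g hg
    rw [hAB i g, identT, if_neg hg, mul_zero, zero_sub]
    exact neg_nonpos.mpr (hB0 i g)
  -- all iterates are feasible
  have hyF : ∀ k, y k ∈ FSet A b ε := by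
    intro k
    induction k with
    | zero => exact hy0F
    | succ k ih =>
      obtain ⟨-, -, -, ⟨ik, hα, ⟨hmem, -⟩, -⟩, hyk1⟩ := hstep k
      rw [hyk1, hα]
      exact hmem
  have hypos : ∀ k i, 0 < y k i := fun k => (hyF k).1
  have hfeas : ∀ k i, ε * b i ≤ tApp A (cPow (y k) (1 / ((m - 1 : ℕ) : ℝ))) i :=
    fun k => (hyF k).2
  -- monotone residual norms
  set C0 := enorm2 (fres A b (y 0)) with hC0def
  have hC0nn : 0 ≤ C0 := enorm2_nonneg _
  have hnorm : ∀ k, enorm2 (fres A b (y k)) ≤ C0 := by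
    intro k
    induction k with
    | zero => exact le_refl _
    | succ k ih =>
      obtain ⟨-, -, -, ⟨ik, hα, ⟨-, hdec⟩, -⟩, hyk1⟩ := hstep k
      have h1 : enorm2 (fres A b (y (k + 1))) ^ 2 ≤ enorm2 (fres A b (y k)) ^ 2 := by
        rw [hyk1, hα]
        refine le_trans hdec ?_
        have h2 : 1 - 2 * σ * ρ ^ ik ≤ 1 := by nlinarith [pow_pos hρ0 ik]
        nlinarith [sq_nonneg (enorm2 (fres A b (y k)))]
      have h2 : ∑ i, fres A b (y (k + 1)) i ^ 2 ≤ ∑ i, fres A b (y k) i ^ 2 := by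
        rw [← sq_enorm2, ← sq_enorm2]; exact h1
      exact le_trans (Real.sqrt_le_sqrt h2) ih
  have habs : ∀ k i, |fres A b (y k) i| ≤ C0 :=
    fun k i => (abs_le_enorm2 _ i).trans (hnorm k)
  have hupper : ∀ k i, ∑ g, A i g * Pbig (m - 1) (y k) g ≤ b i + C0 := by
    intro k i
    have h := (abs_le.mp (habs k i)).2
    have h2 : fres A b (y k) i = (∑ g, A i g * Pbig (m - 1) (y k) g) - b i := rfl
    linarith [h2 ▸ h]
  -- uniform bound on the iterates
  set K := Finset.univ.sup' hne (fun i => (b i + C0) / (ε * b i)) with hKdef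
  have hyB : ∀ k i, y k i ≤ K * y 0 i := by
    intro k i
    obtain ⟨i0, -, hi0⟩ := Finset.exists_max_image Finset.univ
      (fun i => y k i / y 0 i) hne
    set t := y k i0 / y 0 i0 with htd
    have ht0 : 0 < t := div_pos (hypos k i0) (hypos 0 i0)
    have hscale : ∀ l, y k l ≤ t * y 0 l := fun l => by
      have h := hi0 l (Finset.mem_univ l)
      calc y k l = (y k l / y 0 l) * y 0 l := (div_mul_cancel₀ _ (hypos 0 l).ne').symm
        _ ≤ t * y 0 l := mul_le_mul_of_nonneg_right h (hypos 0 l).le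
    have hup := hupper k i0
    have hdec_k := sum_decomp A B hAB hq (hypos k) i0
    have hdec_0 := sum_decomp A B hAB hq (hypos 0) i0
    set Sk := ∑ g, B i0 g * Pbig (m - 1) (y k) g with hSk
    set S0 := ∑ g, B i0 g * Pbig (m - 1) (y 0) g with hS0
    have hBle : Sk ≤ t * S0 := by
      rw [hSk, hS0, Finset.mul_sum]
      refine Finset.sum_le_sum fun g _ => ?_
      calc B i0 g * Pbig (m - 1) (y k) g
          ≤ B i0 g * (t * Pbig (m - 1) (y 0) g) :=
            mul_le_mul_of_nonneg_left
              (Pbig_le_scale hq ht0 (hypos 0) (fun l => (hypos k l).le) hscale g)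
              (hB0 i0 g)
        _ = t * (B i0 g * Pbig (m - 1) (y 0) g) := by ring
    have hyk_i0 : y k i0 = t * y 0 i0 := (div_mul_cancel₀ _ (hypos 0 i0).ne').symm
    have hfe0 : ε * b i0 ≤ s * y 0 i0 - S0 := by
      have h := hfeas 0 i0
      rw [tApp_eq_sum_Pbig, hdec_0] at h
      exact h
    have hchain : t * (ε * b i0) ≤ b i0 + C0 := by
      have h1 : t * (ε * b i0) ≤ t * (s * y 0 i0 - S0) :=
        mul_le_mul_of_nonneg_left hfe0 ht0.le
      have h2 : s * y k i0 - Sk ≤ b i0 + C0 := by rw [← hdec_k]; exact hup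
      have e : t * (s * y 0 i0 - S0) = s * (t * y 0 i0) - t * S0 := by ring
      rw [e, ← hyk_i0] at h1
      linarith
    have htK : t ≤ K := by
      have hεb : 0 < ε * b i0 := mul_pos hε0 (hb i0)
      have h : t ≤ (b i0 + C0) / (ε * b i0) := (le_div_iff₀ hεb).mpr hchain
      refine h.trans ?_
      rw [hKdef]
      exact Finset.le_sup' (fun i => (b i + C0) / (ε * b i)) (Finset.mem_univ i0)
    calc y k i ≤ t * y 0 i := hscale i
      _ ≤ K * y 0 i := mul_le_mul_of_nonneg_right htK (hypos 0 i).le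
  -- the Jacobian is the explicit matrix, and `y k + d k` solves `J w = b`
  have hjac : ∀ k, jacM (fres A b) (y k) = Jex A (y k) :=
    fun k => jacM_fres_eq A b hq (hypos k)
  have hJd : ∀ k, Jex A (y k) *ᵥ d k = -fres A b (y k) := by
    intro k
    obtain ⟨-, hde, -, -, -⟩ := hstep k
    rw [hjac k] at hde
    exact hde
  have hJy : ∀ k i, (Jex A (y k) *ᵥ y k) i
      = tApp A (cPow (y k) (1 / ((m - 1 : ℕ) : ℝ))) i := by
    intro k i
    rw [Jex_mulVec_self A hq (hypos k) i, tApp_eq_sum_Pbig]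
  have hwb : ∀ k, Jex A (y k) *ᵥ (y k + d k) = b := by
    intro k
    funext i
    rw [Matrix.mulVec_add]
    have h2 : (Jex A (y k) *ᵥ d k) i = -(fres A b (y k) i) := by rw [hJd k]; rfl
    have h3 : fres A b (y k) i
        = tApp A (cPow (y k) (1 / ((m - 1 : ℕ) : ℝ))) i - b i := rfl
    show (Jex A (y k) *ᵥ y k) i + (Jex A (y k) *ᵥ d k) i = b i
    rw [hJy k i, h2, h3]
    ring
  have hoff : ∀ k, ∀ i l, i ≠ l → Jex A (y k) i l ≤ 0 :=
    fun k i l hil => Jex_offdiag A hZ (hypos k) hil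
  have hMy : ∀ k i, 0 < (Jex A (y k) *ᵥ y k) i := by
    intro k i
    rw [hJy k i]
    exact lt_of_lt_of_le (mul_pos hε0 (hb i)) (hfeas k i)
  have hwfacts : ∀ k, (∀ i, 0 ≤ y k i + d k i) ∧
      ∀ i, y k i + d k i ≤ ε⁻¹ * y k i := by
    intro k
    constructor
    · have h := zcomp (Jex A (y k)) (y k) (y k + d k) (hypos k) (hoff k) (hMy k)
        (fun i => by rw [hwb k]; exact (hb i).le)
      intro i
      simpa using h i
    · have h := zcomp (Jex A (y k)) (y k) (ε⁻¹ • y k - (y k + d k)) (hypos k) (hoff k)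
        (hMy k) ?_
      · intro i
        have h2 := h i
        have h3 : (ε⁻¹ • y k - (y k + d k)) i = ε⁻¹ * y k i - (y k i + d k i) := rfl
        rw [h3] at h2
        linarith
      · intro i
        rw [Matrix.mulVec_sub, Matrix.mulVec_smul, hwb k]
        have h4 : (ε⁻¹ • (Jex A (y k) *ᵥ y k) - b) i
            = ε⁻¹ * (Jex A (y k) *ᵥ y k) i - b i := rfl
        rw [h4, hJy k i]
        have h5 := hfeas k i
        have h6 : ε⁻¹ * (ε * b i) ≤ ε⁻¹ * tApp A (cPow (y k) (1 / ((m - 1 : ℕ) : ℝ))) i :=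
          mul_le_mul_of_nonneg_left h5 (inv_pos.mpr hε0).le
        rw [← mul_assoc, inv_mul_cancel₀ hε0.ne', one_mul] at h6
        linarith
  have hinv1 : 1 ≤ ε⁻¹ := by
    nlinarith [mul_inv_cancel₀ hε0.ne', inv_pos.mpr hε0]
  refine ⟨⟨enorm2 (fun i => K * y 0 i), fun k => ?_⟩,
    ⟨enorm2 (fun i => ε⁻¹ * (K * y 0 i)), fun k => ?_⟩,
    1, one_pos, fun k a ha0 ha1 => ?_⟩
  · refine enorm2_le_enorm2 fun i => ?_
    have h1 := hyB k i
    have h2 := (hypos k i).le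
    nlinarith
  · refine enorm2_le_enorm2 fun i => ?_
    have h1 := (hwfacts k).1 i
    have h2 := (hwfacts k).2 i
    have h3 := hypos k i
    have h4 := hyB k i
    have h5 : 0 < ε⁻¹ := inv_pos.mpr hε0
    -- |d k i| ≤ ε⁻¹ * y k i ≤ ε⁻¹ * (K * y 0 i)
    have h6 : -(ε⁻¹ * (K * y 0 i)) ≤ d k i := by nlinarith
    have h7 : d k i ≤ ε⁻¹ * (K * y 0 i) := by nlinarith
    nlinarith
  · -- feasibility of all steps with a ∈ (0,1)
    have hpos' : ∀ i, 0 < (y k + a • d k) i := by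
      intro i
      have h1 := (hwfacts k).1 i
      have h2 := hypos k i
      show 0 < y k i + a * d k i
      nlinarith
    refine ⟨hpos', fun i => ?_⟩
    have htan := tangent_ineq A hq hZ (hypos k) hpos' i
    have hsm : (y k + a • d k) - y k = a • d k := by
      funext l; show y k l + a * d k l - y k l = a * d k l; ring
    rw [hsm] at htan
    have hmv : (Jex A (y k) *ᵥ (a • d k)) i = a * (-(fres A b (y k) i)) := by
      rw [Matrix.mulVec_smul, hJd k]; rfl
    rw [hmv] at htan
    rw [← tApp_eq_sum_Pbig, ← tApp_eq_sum_Pbig] at htan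
    have h3 : fres A b (y k) i
        = tApp A (cPow (y k) (1 / ((m - 1 : ℕ) : ℝ))) i - b i := rfl
    rw [h3] at htan
    have h5 := hfeas k i
    have h6 := hb i
    have h7 : (1 - a) * (ε * b i)
        ≤ (1 - a) * tApp A (cPow (y k) (1 / ((m - 1 : ℕ) : ℝ))) i :=
      mul_le_mul_of_nonneg_left h5 (by linarith)
    have h8 : a * (ε * b i) ≤ a * b i :=
      mul_le_mul_of_nonneg_left
        (by nlinarith [mul_pos (show (0:ℝ) < 1 - ε by linarith) h6]) ha0.le
    nlinarith
end
end

section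
/- Let m ≥ 3, let A be a semi-symmetric strong M-tensor of order m and dimension n, let b ∈ ℝⁿ with b ≥ 0, I₊ = {i : b_i > 0} nonempty, I₀ = {i : b_i = 0}, and suppose for every i ∈ I₀ there exist indices i₂,…,i_m ∈ I₊ with a_{i i₂…i_m} ≠ 0. Let 0 < ε′ < ε < 1. Then the set F̄_{ε,ε′} is bounded away from zero: there exists δ > 0 such that y_i ≥ δ for every y ∈ F̄_{ε,ε′} and every i ∈ {1,…,n}. -/
open Finset Matrix Filter Topology

noncomputable section

lemma hasFDerivAt_tApp {n q : ℕ} (A : Fin n → (Fin q → Fin n) → ℝ)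
    (i : Fin n) (y : Fin n → ℝ) (hy : ∀ k, 0 < y k) :
    HasFDerivAt (fun z : Fin n → ℝ => tApp A (cPow z (1 / (q : ℝ))) i)
      (∑ g : Fin q → Fin n, A i g •
        (∑ j : Fin q, (∏ l ∈ Finset.univ.erase j, (y (g l)) ^ ((1:ℝ)/q)) •
          (((1:ℝ)/q * (y (g j)) ^ ((1:ℝ)/q - 1)) •
            (ContinuousLinearMap.proj (g j) : (Fin n → ℝ) →L[ℝ] ℝ)))) y := by
  have hfac : ∀ g : Fin q → Fin n, ∀ j : Fin q,
      HasFDerivAt (fun z : Fin n → ℝ => (z (g j)) ^ ((1:ℝ)/q))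
        (((1:ℝ)/q * (y (g j)) ^ ((1:ℝ)/q - 1)) •
          (ContinuousLinearMap.proj (g j) : (Fin n → ℝ) →L[ℝ] ℝ)) y := by
    intro g j
    have h1 : HasDerivAt (fun t : ℝ => t ^ ((1:ℝ)/q))
        ((1:ℝ)/q * (y (g j)) ^ ((1:ℝ)/q - 1)) (y (g j)) :=
      Real.hasDerivAt_rpow_const (Or.inl (hy (g j)).ne')
    exact h1.comp_hasFDerivAt y
      ((ContinuousLinearMap.proj (g j) : (Fin n → ℝ) →L[ℝ] ℝ)).hasFDerivAt
  have hprod : ∀ g : Fin q → Fin n,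
      HasFDerivAt (fun z : Fin n → ℝ => ∏ j : Fin q, (z (g j)) ^ ((1:ℝ)/q))
        (∑ j : Fin q, (∏ l ∈ Finset.univ.erase j, (y (g l)) ^ ((1:ℝ)/q)) •
          (((1:ℝ)/q * (y (g j)) ^ ((1:ℝ)/q - 1)) •
            (ContinuousLinearMap.proj (g j) : (Fin n → ℝ) →L[ℝ] ℝ))) y := by
    intro g
    exact HasFDerivAt.finset_prod (fun j _ => hfac g j)
  have : (fun z : Fin n → ℝ => tApp A (cPow z (1 / (q : ℝ))) i) =
      fun z => ∑ g : Fin q → Fin n, A i g * ∏ j : Fin q, (z (g j)) ^ ((1:ℝ)/q) := rfl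
  rw [this]
  exact HasFDerivAt.fun_sum (fun g _ => (hprod g).const_mul (A i g))


/-- coefficient in the Jacobian formula -/
def Ecoef {n q : ℕ} (y : Fin n → ℝ) (g : Fin q → Fin n) (j : Fin q) : ℝ :=
  (∏ l ∈ Finset.univ.erase j, (y (g l)) ^ ((1:ℝ)/q)) * ((1:ℝ)/q * (y (g j)) ^ ((1:ℝ)/q - 1))

lemma jac_entry {n q : ℕ} (A : Fin n → (Fin q → Fin n) → ℝ) (b : Fin n → ℝ)
    (y : Fin n → ℝ) (hy : ∀ k, 0 < y k) (i k : Fin n) :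
    jacM (fres A b) y i k =
      ∑ g : Fin q → Fin n, A i g * ∑ j : Fin q, if g j = k then Ecoef y g j else 0 := by
  have hD : HasFDerivAt (fun z : Fin n → ℝ => fres A b z i)
      (∑ g : Fin q → Fin n, A i g •
        (∑ j : Fin q, (∏ l ∈ Finset.univ.erase j, (y (g l)) ^ ((1:ℝ)/q)) •
          (((1:ℝ)/q * (y (g j)) ^ ((1:ℝ)/q - 1)) •
            (ContinuousLinearMap.proj (g j) : (Fin n → ℝ) →L[ℝ] ℝ)))) y := by
    have := (hasFDerivAt_tApp A i y hy).sub_const (b i)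
    simpa [fres, one_div] using this
  rw [jacM, hD.fderiv]
  simp only [ContinuousLinearMap.coe_sum', Finset.sum_apply, ContinuousLinearMap.coe_smul',
    Pi.smul_apply, ContinuousLinearMap.proj_apply, smul_eq_mul, Ecoef]
  congr 1; funext g
  rw [Finset.mul_sum, Finset.mul_sum]
  congr 1; funext j
  rcases eq_or_ne (g j) k with h | h
  · simp [h, Pi.single_apply, mul_assoc]
  · simp [Pi.single_apply, h]


lemma Ecoef_nonneg {n q : ℕ} {y : Fin n → ℝ} (hy : ∀ k, 0 < y k)
    (g : Fin q → Fin n) (j : Fin q) : 0 ≤ Ecoef y g j := by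
  have h1 : 0 ≤ ∏ l ∈ Finset.univ.erase j, (y (g l)) ^ ((1:ℝ)/q) :=
    Finset.prod_nonneg fun l _ => Real.rpow_nonneg (hy (g l)).le _
  have h2 : 0 ≤ (1:ℝ)/q * (y (g j)) ^ ((1:ℝ)/q - 1) :=
    mul_nonneg (by positivity) (Real.rpow_nonneg (hy (g j)).le _)
  exact mul_nonneg h1 h2

lemma ite_Ecoef_nonneg {n q : ℕ} {y : Fin n → ℝ} (hy : ∀ k, 0 < y k)
    (g : Fin q → Fin n) (k : Fin n) :
    0 ≤ ∑ j : Fin q, if g j = k then Ecoef y g j else 0 := by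
  refine Finset.sum_nonneg fun j _ => ?_
  split
  · exact Ecoef_nonneg hy g j
  · exact le_refl 0

lemma Ecoef_mul_y {n q : ℕ} {y : Fin n → ℝ} (hy : ∀ k, 0 < y k)
    (g : Fin q → Fin n) (j : Fin q) :
    Ecoef y g j * y (g j) = (1:ℝ)/q * ∏ l, (y (g l)) ^ ((1:ℝ)/q) := by
  have hne : y (g j) ≠ 0 := (hy (g j)).ne'
  have h1 : (y (g j)) ^ ((1:ℝ)/q - 1) * y (g j) = (y (g j)) ^ ((1:ℝ)/q) := by
    rw [Real.rpow_sub_one hne, div_mul_cancel₀ _ hne]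
  calc Ecoef y g j * y (g j)
      = (∏ l ∈ Finset.univ.erase j, (y (g l)) ^ ((1:ℝ)/q)) *
          ((1:ℝ)/q * ((y (g j)) ^ ((1:ℝ)/q - 1) * y (g j))) := by rw [Ecoef]; ring
    _ = (1:ℝ)/q * ((∏ l ∈ Finset.univ.erase j, (y (g l)) ^ ((1:ℝ)/q)) *
          (y (g j)) ^ ((1:ℝ)/q)) := by rw [h1]; ring
    _ = (1:ℝ)/q * ∏ l, (y (g l)) ^ ((1:ℝ)/q) := by
          rw [Finset.prod_erase_mul _ _ (Finset.mem_univ j)]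

lemma euler {n q : ℕ} (hq : q ≠ 0) (A : Fin n → (Fin q → Fin n) → ℝ) (b : Fin n → ℝ)
    (y : Fin n → ℝ) (hy : ∀ k, 0 < y k) (i : Fin n) :
    ∑ k, jacM (fres A b) y i k * y k = tApp A (cPow y (1 / (q : ℝ))) i := by
  have hq' : (q:ℝ) ≠ 0 := Nat.cast_ne_zero.2 hq
  simp only [jac_entry A b y hy i]
  have htApp : tApp A (cPow y (1 / (q : ℝ))) i =
      ∑ g : Fin q → Fin n, A i g * ∏ l, (y (g l)) ^ ((1:ℝ)/q) := by
    simp [tApp, cPow]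
  rw [htApp]
  calc ∑ k, (∑ g : Fin q → Fin n, A i g * ∑ j : Fin q, ite (g j = k) (Ecoef y g j) 0) * y k
      = ∑ k, ∑ g : Fin q → Fin n, A i g * (∑ j : Fin q, ite (g j = k) (Ecoef y g j) 0) * y k :=
        Finset.sum_congr rfl fun k _ => Finset.sum_mul _ _ _
    _ = ∑ g : Fin q → Fin n, ∑ k, A i g * (∑ j : Fin q, ite (g j = k) (Ecoef y g j) 0) * y k :=
        Finset.sum_comm
    _ = ∑ g : Fin q → Fin n, A i g * ∑ k, (∑ j : Fin q, ite (g j = k) (Ecoef y g j) 0) * y k := by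
        refine Finset.sum_congr rfl fun g _ => ?_
        simp only [mul_assoc]
        rw [← Finset.mul_sum]
    _ = ∑ g : Fin q → Fin n, A i g * ∏ l, (y (g l)) ^ ((1:ℝ)/q) := by
        refine Finset.sum_congr rfl fun g _ => ?_
        congr 1
        calc ∑ k, (∑ j : Fin q, ite (g j = k) (Ecoef y g j) 0) * y k
            = ∑ k, ∑ j : Fin q, ite (g j = k) (Ecoef y g j * y k) 0 := by
              simp [Finset.sum_mul, ite_mul]
          _ = ∑ j : Fin q, ∑ k, ite (g j = k) (Ecoef y g j * y k) 0 := Finset.sum_comm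
          _ = ∑ j : Fin q, Ecoef y g j * y (g j) := by
              refine Finset.sum_congr rfl fun j _ => ?_
              rw [Finset.sum_ite_eq Finset.univ (g j) (fun k => Ecoef y g j * y k)]
              simp
          _ = ∑ _j : Fin q, (1:ℝ)/q * ∏ l, (y (g l)) ^ ((1:ℝ)/q) :=
              Finset.sum_congr rfl fun j _ => Ecoef_mul_y hy g j
          _ = ∏ l, (y (g l)) ^ ((1:ℝ)/q) := by
              rw [Finset.sum_const, Finset.card_univ, Fintype.card_fin, nsmul_eq_mul,
                ← mul_assoc, mul_one_div_cancel hq', one_mul]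

lemma jac_offdiag_nonpos {n q : ℕ} {A : Fin n → (Fin q → Fin n) → ℝ} (hZ : IsZTensor A)
    (b : Fin n → ℝ) {y : Fin n → ℝ} (hy : ∀ k, 0 < y k) {i k : Fin n} (hik : i ≠ k) :
    jacM (fres A b) y i k ≤ 0 := by
  rw [jac_entry A b y hy i k]
  refine Finset.sum_nonpos fun g _ => ?_
  by_cases hgi : ∀ j, g j = i
  · have : ∀ j : Fin q, (if g j = k then Ecoef y g j else 0) = 0 := fun j => by
      rw [hgi j, if_neg hik]
    simp [this]
  · exact mul_nonpos_iff.mpr (Or.inr ⟨hZ i g hgi, ite_Ecoef_nonneg hy g k⟩)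

lemma Ecoef_const_sum {n q : ℕ} (hq : q ≠ 0) {y : Fin n → ℝ} (hy : ∀ k, 0 < y k) (i : Fin n) :
    ∑ j : Fin q, Ecoef y (fun _ => i) j = 1 := by
  have hq' : (q:ℝ) ≠ 0 := Nat.cast_ne_zero.2 hq
  have ht : (0:ℝ) < y i := hy i
  have hone : 1 ≤ q := Nat.one_le_iff_ne_zero.2 hq
  have hval : ∀ j : Fin q, Ecoef y (fun _ => i) j =
      (y i ^ ((1:ℝ)/q)) ^ (q - 1 : ℕ) * ((1:ℝ)/q * y i ^ ((1:ℝ)/q - 1)) := by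
    intro j
    rw [Ecoef, Finset.prod_const, Finset.card_erase_of_mem (Finset.mem_univ j),
      Finset.card_univ, Fintype.card_fin]
  rw [Finset.sum_congr rfl fun j _ => hval j, Finset.sum_const, Finset.card_univ,
    Fintype.card_fin, nsmul_eq_mul]
  have h1 : (y i ^ ((1:ℝ)/q)) ^ (q - 1 : ℕ) = y i ^ ((1:ℝ)/q * ((q:ℝ) - 1)) := by
    rw [← Real.rpow_natCast (y i ^ ((1:ℝ)/q)) (q-1), ← Real.rpow_mul ht.le]
    congr 1
    rw [Nat.cast_sub hone, Nat.cast_one]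
  rw [h1]
  have he : (1:ℝ)/q * ((q:ℝ) - 1) + ((1:ℝ)/q - 1) = 0 := by field_simp; ring
  calc (q:ℝ) * (y i ^ ((1:ℝ)/q * ((q:ℝ)-1)) * ((1:ℝ)/q * y i ^ ((1:ℝ)/q - 1)))
      = ((q:ℝ) * ((1:ℝ)/q)) * (y i ^ ((1:ℝ)/q * ((q:ℝ)-1)) * y i ^ ((1:ℝ)/q - 1)) := by ring
    _ = y i ^ ((1:ℝ)/q * ((q:ℝ)-1)) * y i ^ ((1:ℝ)/q - 1) := by
        rw [mul_one_div_cancel hq', one_mul]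
    _ = 1 := by rw [← Real.rpow_add ht, he, Real.rpow_zero]

lemma jac_diag_le {n q : ℕ} (hq : q ≠ 0) {A : Fin n → (Fin q → Fin n) → ℝ} (hZ : IsZTensor A)
    {s : ℝ} (hAc : ∀ i : Fin n, A i (fun _ => i) ≤ s)
    (b : Fin n → ℝ) {y : Fin n → ℝ} (hy : ∀ k, 0 < y k) (i : Fin n) :
    jacM (fres A b) y i i ≤ s := by
  rw [jac_entry A b y hy i i,
    ← Finset.add_sum_erase _ _ (Finset.mem_univ (fun _ : Fin q => i))]
  have h1 : A i (fun _ => i) * (∑ j : Fin q, if (fun _ : Fin q => i) j = i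
      then Ecoef y (fun _ => i) j else 0) = A i (fun _ => i) := by
    have hthis : ∀ j : Fin q, (if (fun _ : Fin q => i) j = i then Ecoef y (fun _ => i) j else 0)
        = Ecoef y (fun _ => i) j := fun j => if_pos rfl
    rw [Finset.sum_congr rfl fun j _ => hthis j, Ecoef_const_sum hq hy i, mul_one]
  have h2 : ∑ g ∈ Finset.univ.erase (fun _ : Fin q => i),
      A i g * ∑ j : Fin q, (if g j = i then Ecoef y g j else 0) ≤ 0 := by
    refine Finset.sum_nonpos fun g hg => ?_
    have hgne : ¬ ∀ j, g j = i := by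
      intro hgi
      exact (Finset.mem_erase.1 hg).1 (funext fun j => hgi j)
    exact mul_nonpos_iff.mpr (Or.inr ⟨hZ i g hgne, ite_Ecoef_nonneg hy g i⟩)
  calc A i (fun _ => i) * _ + _ ≤ A i (fun _ => i) + 0 := add_le_add (le_of_eq h1) h2
    _ ≤ s := by rw [add_zero]; exact hAc i

lemma cPow_pow {q : ℕ} (hq : q ≠ 0) {t : ℝ} (ht : 0 < t) : (t ^ ((1:ℝ)/q)) ^ (q : ℕ) = t := by
  have hq' : (q:ℝ) ≠ 0 := Nat.cast_ne_zero.2 hq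
  rw [← Real.rpow_natCast (t ^ ((1:ℝ)/q)) q, ← Real.rpow_mul ht.le, one_div,
    inv_mul_cancel₀ hq', Real.rpow_one]

lemma tApp_le_general {n q : ℕ} (hq : q ≠ 0) {A : Fin n → (Fin q → Fin n) → ℝ}
    (hZ : IsZTensor A) {s : ℝ} (hAc : ∀ i : Fin n, A i (fun _ => i) ≤ s)
    {y : Fin n → ℝ} (hy : ∀ k, 0 < y k) (i : Fin n) :
    tApp A (cPow y (1 / (q:ℝ))) i ≤ s * y i := by
  have hsplit : tApp A (cPow y (1 / (q:ℝ))) i = A i (fun _ => i) * y i +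
      ∑ g ∈ Finset.univ.erase (fun _ : Fin q => i),
        A i g * ∏ l, (y (g l)) ^ ((1:ℝ)/q) := by
    rw [tApp, ← Finset.add_sum_erase _ _ (Finset.mem_univ (fun _ : Fin q => i))]
    congr 1
    show A i (fun _ => i) * ∏ _l : Fin q, (y i) ^ ((1:ℝ)/q) = _
    rw [Finset.prod_const, Finset.card_univ, Fintype.card_fin, cPow_pow hq (hy i)]
  rw [hsplit]
  have h2 : ∑ g ∈ Finset.univ.erase (fun _ : Fin q => i),
      A i g * ∏ l, (y (g l)) ^ ((1:ℝ)/q) ≤ 0 := by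
    refine Finset.sum_nonpos fun g hg => ?_
    have hgne : ¬ ∀ j, g j = i := fun hgi => (Finset.mem_erase.1 hg).1 (funext fun j => hgi j)
    exact mul_nonpos_iff.mpr (Or.inr ⟨hZ i g hgne,
      Finset.prod_nonneg fun l _ => Real.rpow_nonneg (hy (g l)).le _⟩)
  have h3 : A i (fun _ => i) * y i ≤ s * y i :=
    mul_le_mul_of_nonneg_right (hAc i) (hy i).le
  linarith

lemma tApp_le_sharp {n q : ℕ} (hq : q ≠ 0) {A : Fin n → (Fin q → Fin n) → ℝ}
    (hZ : IsZTensor A) {s : ℝ} (hAc : ∀ i : Fin n, A i (fun _ => i) ≤ s)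
    {y : Fin n → ℝ} (hy : ∀ k, 0 < y k) (i : Fin n)
    {gs : Fin q → Fin n} (hgs : ¬ ∀ j, gs j = i) :
    tApp A (cPow y (1 / (q:ℝ))) i ≤ s * y i + A i gs * ∏ l, (y (gs l)) ^ ((1:ℝ)/q) := by
  have hsplit : tApp A (cPow y (1 / (q:ℝ))) i = A i (fun _ => i) * y i +
      ∑ g ∈ Finset.univ.erase (fun _ : Fin q => i),
        A i g * ∏ l, (y (g l)) ^ ((1:ℝ)/q) := by
    rw [tApp, ← Finset.add_sum_erase _ _ (Finset.mem_univ (fun _ : Fin q => i))]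
    congr 1
    show A i (fun _ => i) * ∏ _l : Fin q, (y i) ^ ((1:ℝ)/q) = _
    rw [Finset.prod_const, Finset.card_univ, Fintype.card_fin, cPow_pow hq (hy i)]
  rw [hsplit]
  have hmem : gs ∈ Finset.univ.erase (fun _ : Fin q => i) := by
    refine Finset.mem_erase.2 ⟨?_, Finset.mem_univ _⟩
    intro h
    exact hgs (fun j => by rw [h])
  rw [← Finset.add_sum_erase _ _ hmem]
  have h2 : ∑ g ∈ (Finset.univ.erase (fun _ : Fin q => i)).erase gs,
      A i g * ∏ l, (y (g l)) ^ ((1:ℝ)/q) ≤ 0 := by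
    refine Finset.sum_nonpos fun g hg => ?_
    have hg' := Finset.mem_of_mem_erase hg
    have hgne : ¬ ∀ j, g j = i := fun hgi => (Finset.mem_erase.1 hg').1 (funext fun j => hgi j)
    exact mul_nonpos_iff.mpr (Or.inr ⟨hZ i g hgne,
      Finset.prod_nonneg fun l _ => Real.rpow_nonneg (hy (g l)).le _⟩)
  have h3 : A i (fun _ => i) * y i ≤ s * y i :=
    mul_le_mul_of_nonneg_right (hAc i) (hy i).le
  linarith

lemma zmat_mono {K : Type} [Fintype K] [DecidableEq K] (M : Matrix K K ℝ)
    (hZ : ∀ i j, i ≠ j → M i j ≤ 0) (u : K → ℝ) (hu : ∀ i, 0 < u i)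
    (hMu : ∀ i, 0 < (M *ᵥ u) i) (z : K → ℝ) (hz : ∀ i, 0 ≤ (M *ᵥ z) i) (i : K) : 0 ≤ z i := by
  by_contra hneg
  push_neg at hneg
  obtain ⟨i₀, -, hmin⟩ := Finset.exists_min_image Finset.univ (fun k => z k / u k)
    ⟨i, Finset.mem_univ i⟩
  set t := z i₀ / u i₀ with ht_def
  have ht : t < 0 := lt_of_le_of_lt (hmin i (Finset.mem_univ i))
    (div_neg_of_neg_of_pos hneg (hu i))
  have hzl : ∀ l, t * u l ≤ z l := fun l => by
    have h := hmin l (Finset.mem_univ l)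
    rw [le_div_iff₀ (hu l)] at h
    exact h
  have hzi : z i₀ = t * u i₀ := by
    rw [ht_def, div_mul_cancel₀ _ (hu i₀).ne']
  have key : (M *ᵥ z) i₀ ≤ t * (M *ᵥ u) i₀ := by
    simp only [Matrix.mulVec, dotProduct]
    rw [Finset.mul_sum]
    refine Finset.sum_le_sum fun l _ => ?_
    rcases eq_or_ne l i₀ with rfl | hne
    · rw [hzi]; ring_nf; exact le_refl _
    · calc M i₀ l * z l ≤ M i₀ l * (t * u l) :=
            mul_le_mul_of_nonpos_left (hzl l) (hZ i₀ l (Ne.symm hne))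
        _ = t * (M i₀ l * u l) := by ring
  have h1 : t * (M *ᵥ u) i₀ < 0 := mul_neg_of_neg_of_pos ht (hMu i₀)
  exact absurd (lt_of_le_of_lt (le_trans (hz i₀) key) h1) (lt_irrefl 0)


theorem FBar_bounded_away_from_zero {m n : ℕ} (hm : 3 ≤ m)
    (A : Fin n → (Fin (m - 1) → Fin n) → ℝ)
    (hsym : IsSemiSymmetric A) (hM : IsStrongMTensor A)
    (b : Fin n → ℝ) (hb : ∀ i, 0 ≤ b i) (hbp : ∃ i, 0 < b i) (hI0 : I0Hyp A b)
    (ε ε' : ℝ) (h1 : 0 < ε') (h2 : ε' < ε) (h3 : ε < 1) :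
    ∃ δ : ℝ, 0 < δ ∧ ∀ y ∈ FBar A b ε ε', ∀ i, δ ≤ y i := by
  classical
  obtain ⟨s, B, hB, hAB, -⟩ := hM
  have hq : m - 1 ≠ 0 := by omega
  have hqpos : 0 < m - 1 := Nat.pos_of_ne_zero hq
  have hZ : IsZTensor A := by
    intro i g hg
    rw [hAB i g, identT, if_neg hg]
    have := hB i g
    linarith
  have hAc : ∀ i, A i (fun _ => i) ≤ s := by
    intro i
    rw [hAB i _, identT, if_pos (fun _ => rfl)]
    have := hB i (fun _ => i)
    linarith
  have hε : 0 < ε := h1.trans h2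
  by_cases hFB : (FBar A b ε ε').Nonempty
  swap
  · exact ⟨1, one_pos, fun y hy i => absurd ⟨y, hy⟩ hFB⟩
  obtain ⟨y₀, hy₀⟩ := hFB
  obtain ⟨i₀, hi₀⟩ := hbp
  have hy₀pos : ∀ k, 0 < y₀ k := hy₀.1.1
  have hs : 0 < s := by
    have ha := hy₀.1.2 i₀ hi₀
    have hb' := tApp_le_general hq hZ hAc hy₀pos i₀
    nlinarith [hy₀pos i₀, hi₀]
  -- choice of witnesses for I₀ indices
  have heq0 : ∀ i : Fin n, ¬ 0 < b i → b i = 0 := fun i h => le_antisymm (not_lt.1 h) (hb i)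
  choose gfun hgpos hgA using hI0
  set δf : Fin n → ℝ := fun i =>
    if h : 0 < b i then ε * b i / s
    else (-(A i (gfun i (heq0 i h)))) *
      (∏ l, (ε * b (gfun i (heq0 i h) l) / s) ^ ((1:ℝ)/(m-1 : ℕ))) * (ε - ε') / (s * ε)
    with hδf_def
  have hgne : ∀ (i : Fin n) (h : b i = 0), ¬ ∀ j, gfun i h j = i := by
    intro i h hall
    have := hgpos i h ⟨0, hqpos⟩
    rw [hall ⟨0, hqpos⟩, h] at this
    exact lt_irrefl 0 this
  have hAneg : ∀ (i : Fin n) (h : b i = 0), A i (gfun i h) < 0 :=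
    fun i h => lt_of_le_of_ne (hZ i _ (hgne i h)) (hgA i h)
  have hδf : ∀ i, 0 < δf i := by
    intro i
    by_cases h : 0 < b i
    · rw [hδf_def]; simp only [dif_pos h]; positivity
    · rw [hδf_def]; simp only [dif_neg h]
      have h0 := heq0 i h
      apply div_pos
      apply mul_pos
      apply mul_pos
      · linarith [hAneg i h0]
      · exact Finset.prod_pos fun l _ => Real.rpow_pos_of_pos
          (by have := hgpos i h0 l; positivity) _
      · linarith
      · positivity
  refine ⟨Finset.univ.inf' ⟨i₀, Finset.mem_univ i₀⟩ δf, ?_, ?_⟩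
  · exact (Finset.lt_inf'_iff _).2 fun i _ => hδf i
  intro y hy i
  refine le_trans (Finset.inf'_le _ (Finset.mem_univ i)) ?_
  obtain ⟨⟨hypos, hF1⟩, -, hUnit, hF2⟩ := hy
  -- upper bound for tApp and lower bound for positive components
  have hyP : ∀ k, 0 < b k → ε * b k ≤ s * y k :=
    fun k hk => le_trans (hF1 k hk) (tApp_le_general hq hZ hAc hypos k)
  by_cases hbi : 0 < b i
  · rw [hδf_def]; simp only [dif_pos hbi]
    rw [div_le_iff₀ hs]
    linarith [hyP i hbi]
  · -- the I₀ case
    have hbi0 : b i = 0 := heq0 i hbi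
    set M : Matrix (Fin n) (Fin n) ℝ := jacM (fres A b) y with hM_def
    set Mpp := subMat M (fun i => 0 < b i) (fun i => 0 < b i) with hMpp_def
    set v : {i : Fin n // 0 < b i} → ℝ := Mpp⁻¹ *ᵥ bPlus b with hv_def
    -- splitting of sums over the partition I₊ / I₀
    have hsplit : ∀ f : Fin n → ℝ, ∑ k, f k =
        (∑ k : {i : Fin n // 0 < b i}, f k.1) + (∑ k : {i : Fin n // b i = 0}, f k.1) := by
      intro f
      rw [← Finset.sum_filter_add_sum_filter_not Finset.univ (fun i => 0 < b i) f]
      congr 1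
      · exact Finset.sum_subtype _ (by simp) f
      · refine Finset.sum_subtype _ (fun x => ?_) f
        simp only [Finset.mem_filter, Finset.mem_univ, true_and, not_lt]
        exact ⟨fun h => le_antisymm h (hb x), fun h => le_of_eq h⟩
    have hEuler : ∀ j : Fin n,
        (∑ k : {i : Fin n // 0 < b i}, M j k.1 * y k.1) +
        (∑ k : {i : Fin n // b i = 0}, M j k.1 * y k.1) =
          tApp A (cPow y (1 / ((m-1 : ℕ) : ℝ))) j := by
      intro j
      rw [← hsplit (fun k => M j k * y k)]
      exact euler hq A b y hypos j
    -- off-diagonal entries are nonpositive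
    have hMoff : ∀ j k : Fin n, j ≠ k → M j k ≤ 0 :=
      fun j k hjk => jac_offdiag_nonpos hZ b hypos hjk
    -- (Mpp *ᵥ y₊) is bounded below by tApp ≥ ε b₊
    have hQterm : ∀ j : Fin n, 0 < b j →
        (∑ k : {i : Fin n // b i = 0}, M j k.1 * y k.1) ≤ 0 := by
      intro j hj
      refine Finset.sum_nonpos fun k _ => ?_
      have hne : j ≠ k.1 := fun h => by rw [h, k.2] at hj; exact lt_irrefl 0 hj
      exact mul_nonpos_iff.mpr (Or.inr ⟨hMoff j k.1 hne, (hypos k.1).le⟩)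
    have hMppyP : ∀ k : {i : Fin n // 0 < b i},
        ε * b k.1 ≤ (Mpp *ᵥ fun l => y l.1) k := by
      intro k
      have h1' := hEuler k.1
      have h2' := hQterm k.1 k.2
      have h3' := hF1 k.1 k.2
      have : (Mpp *ᵥ fun l => y l.1) k = ∑ l : {i : Fin n // 0 < b i}, M k.1 l.1 * y l.1 := rfl
      rw [this]
      linarith
    have hMppu : ∀ k : {i : Fin n // 0 < b i}, 0 < (Mpp *ᵥ fun l => y l.1) k :=
      fun k => lt_of_lt_of_le (by have := k.2; positivity) (hMppyP k)
    have hZpp : ∀ k l : {i : Fin n // 0 < b i}, k ≠ l → Mpp k l ≤ 0 :=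
      fun k l hkl => hMoff k.1 l.1 (fun h => hkl (Subtype.ext h))
    -- Mpp *ᵥ v = b₊
    have hMv : Mpp *ᵥ v = bPlus b := by
      rw [hv_def, Matrix.mulVec_mulVec,
        Matrix.mul_nonsing_inv Mpp ((Matrix.isUnit_iff_isUnit_det Mpp).1 hUnit),
        Matrix.one_mulVec]
    -- ε v ≤ y on I₊
    have hεv : ∀ k : {i : Fin n // 0 < b i}, ε * v k ≤ y k.1 := by
      intro k
      have hmono := zmat_mono Mpp hZpp (fun l => y l.1) (fun l => hypos l.1) hMppu
        (fun l => y l.1 - ε * v l) ?_ k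
      · linarith [hmono]
      · intro l
        rw [show (fun l : {i : Fin n // 0 < b i} => y l.1 - ε * v l) =
          (fun l => y l.1) - ε • v by funext l; simp [smul_eq_mul],
          Matrix.mulVec_sub, Matrix.mulVec_smul, hMv]
        have := hMppyP l
        simp only [Pi.sub_apply, Pi.smul_apply, smul_eq_mul, bPlus]
        linarith
    -- the I₀ condition
    set t := tApp A (cPow y (1 / ((m-1:ℕ) : ℝ))) i with ht_def
    set w := ∑ k : {i : Fin n // 0 < b i}, M i k.1 * v k with hw_def
    have hF2i : ε' * w ≤ t := by
      have := hF2 ⟨i, hbi0⟩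
      exact this
    have hwB : (∑ k : {i : Fin n // 0 < b i}, M i k.1 * y k.1) ≤ ε * w := by
      rw [hw_def, Finset.mul_sum]
      refine Finset.sum_le_sum fun k _ => ?_
      have hne : i ≠ k.1 := by
        intro h
        have hk2 := k.2
        rw [← h, hbi0] at hk2
        exact lt_irrefl 0 hk2
      calc M i k.1 * y k.1 ≤ M i k.1 * (ε * v k) :=
            mul_le_mul_of_nonpos_left (hεv k) (hMoff i k.1 hne)
        _ = ε * (M i k.1 * v k) := by ring
    -- Sq ≤ s * y i
    have hSq : (∑ k : {i : Fin n // b i = 0}, M i k.1 * y k.1) ≤ s * y i := by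
      rw [← Finset.add_sum_erase _ _ (Finset.mem_univ (⟨i, hbi0⟩ : {i : Fin n // b i = 0}))]
      have hdiag : M i i * y i ≤ s * y i :=
        mul_le_mul_of_nonneg_right (jac_diag_le hq hZ hAc b hypos i) (hypos i).le
      have hrest : ∑ k ∈ Finset.univ.erase (⟨i, hbi0⟩ : {i : Fin n // b i = 0}),
          M i k.1 * y k.1 ≤ 0 := by
        refine Finset.sum_nonpos fun k hk => ?_
        have hne : i ≠ k.1 := by
          intro h
          exact (Finset.mem_erase.1 hk).1 (Subtype.ext h.symm)
        exact mul_nonpos_iff.mpr (Or.inr ⟨hMoff i k.1 hne, (hypos k.1).le⟩)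
      calc M i i * y i + _ ≤ s * y i + 0 := add_le_add hdiag hrest
        _ = s * y i := add_zero _
    -- sharp upper bound
    set gi := gfun i hbi0 with hgi_def
    set Pi0 := ∏ l, (ε * b (gi l) / s) ^ ((1:ℝ)/(m-1 : ℕ)) with hPi0_def
    have hUp : t ≤ s * y i + A i gi * ∏ l, (y (gi l)) ^ ((1:ℝ)/(m-1:ℕ)) :=
      tApp_le_sharp hq hZ hAc hypos i (hgne i hbi0)
    have hprodlb : Pi0 ≤ ∏ l, (y (gi l)) ^ ((1:ℝ)/(m-1:ℕ)) := by
      refine Finset.prod_le_prod (fun l _ => ?_) (fun l _ => ?_)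
      · exact Real.rpow_nonneg (by have := hgpos i hbi0 l; positivity) _
      · refine Real.rpow_le_rpow (by have := hgpos i hbi0 l; positivity) ?_ (by positivity)
        rw [div_le_iff₀ hs]
        linarith [hyP (gi l) (hgpos i hbi0 l)]
    have hterm : A i gi * (∏ l, (y (gi l)) ^ ((1:ℝ)/(m-1:ℕ))) ≤ A i gi * Pi0 :=
      mul_le_mul_of_nonpos_left hprodlb (hAneg i hbi0).le
    -- final arithmetic
    have hEi := hEuler i
    rw [hδf_def]; simp only [dif_neg hbi]
    rw [div_le_iff₀ (by positivity : (0:ℝ) < s * ε)]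
    have hc1 : ε' * (t - (∑ k : {i : Fin n // b i = 0}, M i k.1 * y k.1)) ≤ ε' * (ε * w) := by
      refine mul_le_mul_of_nonneg_left ?_ h1.le
      linarith
    have hc2 : ε * (ε' * w) ≤ ε * t := mul_le_mul_of_nonneg_left hF2i hε.le
    have hc3 : ε' * (∑ k : {i : Fin n // b i = 0}, M i k.1 * y k.1) ≤ ε' * (s * y i) :=
      mul_le_mul_of_nonneg_left hSq h1.le
    -- so (ε - ε') * t ≥ -ε' * s * y i
    have hc4 : -(ε' * (s * y i)) ≤ (ε - ε') * t := by nlinarith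
    have hc5 : (ε - ε') * t ≤ (ε - ε') * (s * y i + A i gi * Pi0) := by
      refine mul_le_mul_of_nonneg_left ?_ (by linarith)
      linarith
    nlinarith
end
end

section
/- Let m ≥ 3 and let A be a semi-symmetric mth-order n-dimensional Z-tensor. Then for every y ∈ ℝⁿ with y > 0 componentwise, the Jacobian matrix g'(y) of the map g(y) = A (y^{[1/(m−1)]})^{m−1} is a Z-matrix: all of its off-diagonal entries are nonpositive. -/
open Finset Matrix Filter Topology

noncomputable section

private lemma aux_fderiv_nonpos {n q : ℕ} (A : Fin n → (Fin q → Fin n) → ℝ) (y : Fin n → ℝ) (hy : ∀ i, 0 < y i)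
    (i j : Fin n) (hij : i ≠ j) (α : ℝ) (hα0 : 0 ≤ α)
    (hZ : ∀ (i : Fin n) (g : Fin q → Fin n), ¬(∀ k, g k = i) → A i g ≤ 0) :
    fderiv ℝ (fun z => ∑ g : Fin q → Fin n, A i g * ∏ k, z (g k) ^ α) y (Pi.single j 1) ≤ 0 := by
  have hfac : ∀ (g : Fin q → Fin n) (k : Fin q),
      HasFDerivAt (fun z : Fin n → ℝ => z (g k) ^ α)
        ((α * y (g k) ^ (α - 1)) • (ContinuousLinearMap.proj (g k) :
          (Fin n → ℝ) →L[ℝ] ℝ)) y := fun g k =>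
    (ContinuousLinearMap.proj (g k) : (Fin n → ℝ) →L[ℝ] ℝ).hasFDerivAt.rpow_const
      (Or.inl (ne_of_gt (hy (g k))))
  have hprod : ∀ g : Fin q → Fin n,
      HasFDerivAt (fun z : Fin n → ℝ => ∏ k, z (g k) ^ α)
        (∑ k, (∏ l ∈ Finset.univ.erase k, y (g l) ^ α) •
          ((α * y (g k) ^ (α - 1)) • (ContinuousLinearMap.proj (g k) :
            (Fin n → ℝ) →L[ℝ] ℝ))) y :=
    fun g => HasFDerivAt.finset_prod (fun k _ => hfac g k)
  have hsum : HasFDerivAt (fun z => ∑ g : Fin q → Fin n, A i g * ∏ k, z (g k) ^ α)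
      (∑ g : Fin q → Fin n, A i g • (∑ k, (∏ l ∈ Finset.univ.erase k, y (g l) ^ α) •
          ((α * y (g k) ^ (α - 1)) • (ContinuousLinearMap.proj (g k) :
            (Fin n → ℝ) →L[ℝ] ℝ)))) y :=
    HasFDerivAt.fun_sum (fun g _ => (hprod g).const_mul (A i g))
  rw [hsum.fderiv]
  simp only [ContinuousLinearMap.coe_sum', Finset.sum_apply, ContinuousLinearMap.coe_smul',
    Pi.smul_apply, ContinuousLinearMap.proj_apply, smul_eq_mul]
  apply Finset.sum_nonpos
  intro g _
  by_cases hgi : ∀ k, g k = i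
  · have : ∀ k : Fin q, (Pi.single j 1 : Fin n → ℝ) (g k) = 0 := by
      intro k; rw [hgi k]; exact Pi.single_eq_of_ne hij 1
    simp [this]
  · have h1 : A i g ≤ 0 := hZ i g hgi
    have h2 : 0 ≤ ∑ k, (∏ l ∈ Finset.univ.erase k, y (g l) ^ α) *
        ((α * y (g k) ^ (α - 1)) * (Pi.single j 1 : Fin n → ℝ) (g k)) := by
      apply Finset.sum_nonneg
      intro k _
      have hp : 0 ≤ (Pi.single j 1 : Fin n → ℝ) (g k) := by
        rcases eq_or_ne (g k) j with h | h
        · rw [h, Pi.single_eq_same]; norm_num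
        · rw [Pi.single_eq_of_ne h]
      have hprodnn : 0 ≤ ∏ l ∈ Finset.univ.erase k, y (g l) ^ α :=
        Finset.prod_nonneg fun l _ => Real.rpow_nonneg (hy (g l)).le α
      have := Real.rpow_nonneg (hy (g k)).le (α - 1)
      positivity
    exact mul_nonpos_of_nonpos_of_nonneg h1 h2


theorem jacobian_is_Zmatrix {m n : ℕ} (hm : 3 ≤ m)
    (A : Fin n → (Fin (m - 1) → Fin n) → ℝ)
    (hZ : IsZTensor A) (hsym : IsSemiSymmetric A) :
    ∀ y : Fin n → ℝ, (∀ i, 0 < y i) →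
      ∀ i j, i ≠ j →
        jacM (fun z => tApp A (cPow z (1 / ((m - 1 : ℕ) : ℝ)))) y i j ≤ 0 := by
  intro y hy i j hij
  have : jacM (fun z => tApp A (cPow z (1 / ((m - 1 : ℕ) : ℝ)))) y i j =
      fderiv ℝ (fun z => ∑ g : Fin (m - 1) → Fin n,
        A i g * ∏ k, z (g k) ^ (1 / ((m - 1 : ℕ) : ℝ))) y (Pi.single j 1) := rfl
  rw [this]
  exact aux_fderiv_nonpos A y hy i j hij _ (by positivity) hZ
end
end

section
/- Let m ≥ 3, let A be a semi-symmetric strong M-tensor of order m and dimension n, let b ∈ ℝⁿ with b > 0, and let ε ∈ (0,1]. Then for every y ∈ F_ε, the Jacobian matrix f'(y) is a nonsingular M-matrix. -/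
open Finset Matrix Filter Topology

noncomputable section

-- Auxiliary lemmas ------------------------------------------------------------

theorem jac_entry_eq {n q : ℕ} (A : Fin n → (Fin q → Fin n) → ℝ) (b : Fin n → ℝ)
    (y : Fin n → ℝ) (hy : ∀ i, 0 < y i) (i k : Fin n) :
    jacM (fres A b) y i k = ∑ g : Fin q → Fin n, A i g *
      ∑ j, (∏ j' ∈ Finset.univ.erase j, y (g j') ^ (1 / (q:ℝ))) *
        ((1 / (q:ℝ) * y (g j) ^ (1 / (q:ℝ) - 1)) * (if g j = k then 1 else 0)) := by
  set α : ℝ := 1 / (q:ℝ)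
  have hL : ∀ g : Fin q → Fin n, HasFDerivAt (fun z : Fin n → ℝ => ∏ j, z (g j) ^ α)
      (∑ j, (∏ j' ∈ Finset.univ.erase j, y (g j') ^ α) •
        ((α * y (g j) ^ (α - 1)) • (ContinuousLinearMap.proj (R := ℝ) (φ := fun _ : Fin n => ℝ) (g j)))) y :=
    fun g => HasFDerivAt.finset_prod (fun j _ =>
      (hasFDerivAt_apply (g j) y).rpow_const (Or.inl (hy (g j)).ne'))
  have hF : HasFDerivAt (fun z : Fin n → ℝ => fres A b z i)
      (∑ g : Fin q → Fin n, A i g • (∑ j, (∏ j' ∈ Finset.univ.erase j, y (g j') ^ α) •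
        ((α * y (g j) ^ (α - 1)) • (ContinuousLinearMap.proj (R := ℝ) (φ := fun _ : Fin n => ℝ) (g j))))) y := by
    have h1 := HasFDerivAt.fun_sum (fun g (_ : g ∈ Finset.univ) => (hL g).const_mul (A i g))
    exact h1.sub_const (b i)
  rw [jacM, hF.fderiv]
  simp only [ContinuousLinearMap.coe_sum', Finset.sum_apply, ContinuousLinearMap.coe_smul',
    Pi.smul_apply, ContinuousLinearMap.proj_apply, smul_eq_mul]
  refine Finset.sum_congr rfl fun g _ => ?_
  congr 1
  refine Finset.sum_congr rfl fun j _ => ?_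
  rw [Pi.single_apply]

theorem jac_rowsum {n q : ℕ} (hq : q ≠ 0) (A : Fin n → (Fin q → Fin n) → ℝ)
    (y : Fin n → ℝ) (hy : ∀ i, 0 < y i) (i : Fin n) :
    ∑ k, (∑ g : Fin q → Fin n, A i g *
      ∑ j, (∏ j' ∈ Finset.univ.erase j, y (g j') ^ (1 / (q:ℝ))) *
        ((1 / (q:ℝ) * y (g j) ^ (1 / (q:ℝ) - 1)) * (if g j = k then 1 else 0))) * y k
      = tApp A (cPow y (1 / (q : ℝ))) i := by
  set α : ℝ := 1 / (q:ℝ) with hα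
  have step1 : ∀ g : Fin q → Fin n,
      ∑ k, (∑ j, (∏ j' ∈ Finset.univ.erase j, y (g j') ^ α) *
        ((α * y (g j) ^ (α - 1)) * (if g j = k then 1 else 0))) * y k
      = ∏ j, y (g j) ^ α := by
    intro g
    have hswap : ∑ k, (∑ j, (∏ j' ∈ Finset.univ.erase j, y (g j') ^ α) *
        ((α * y (g j) ^ (α - 1)) * (if g j = k then 1 else 0))) * y k
        = ∑ j, ∑ k, (∏ j' ∈ Finset.univ.erase j, y (g j') ^ α) *
        ((α * y (g j) ^ (α - 1)) * (if g j = k then 1 else 0)) * y k := by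
      simp_rw [Finset.sum_mul]; rw [Finset.sum_comm]
    rw [hswap]
    have hterm : ∀ j : Fin q, ∑ k, (∏ j' ∈ Finset.univ.erase j, y (g j') ^ α) *
        ((α * y (g j) ^ (α - 1)) * (if g j = k then 1 else 0)) * y k
        = α * ∏ j', y (g j') ^ α := by
      intro j
      rw [Finset.sum_eq_single (g j)]
      · have h1 : y (g j) ^ (α - 1) * y (g j) = y (g j) ^ α := by
          rw [← Real.rpow_add_one (hy (g j)).ne' (α - 1), sub_add_cancel]
        have h2 : (∏ j' ∈ Finset.univ.erase j, y (g j') ^ α) * y (g j) ^ α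
            = ∏ j', y (g j') ^ α :=
          Finset.prod_erase_mul _ _ (Finset.mem_univ j)
        rw [if_pos rfl, mul_one]
        calc (∏ j' ∈ Finset.univ.erase j, y (g j') ^ α) * (α * y (g j) ^ (α - 1)) * y (g j)
            = α * ((∏ j' ∈ Finset.univ.erase j, y (g j') ^ α) * (y (g j) ^ (α - 1) * y (g j))) := by ring
          _ = α * ∏ j', y (g j') ^ α := by rw [h1, h2]
      · intro k _ hk
        rw [if_neg (fun h => hk h.symm)]
        ring
      · intro h; exact absurd (Finset.mem_univ _) h
    rw [Finset.sum_congr rfl (fun j _ => hterm j), Finset.sum_const, Finset.card_univ,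
      Fintype.card_fin, nsmul_eq_mul, hα]
    field_simp
  calc ∑ k, (∑ g : Fin q → Fin n, A i g * ∑ j, (∏ j' ∈ Finset.univ.erase j, y (g j') ^ α) *
        ((α * y (g j) ^ (α - 1)) * (if g j = k then 1 else 0))) * y k
      = ∑ k, ∑ g : Fin q → Fin n, (A i g * ∑ j, (∏ j' ∈ Finset.univ.erase j, y (g j') ^ α) *
        ((α * y (g j) ^ (α - 1)) * (if g j = k then 1 else 0))) * y k := by
        simp_rw [Finset.sum_mul]
    _ = ∑ g : Fin q → Fin n, ∑ k, (A i g * ∑ j, (∏ j' ∈ Finset.univ.erase j, y (g j') ^ α) *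
        ((α * y (g j) ^ (α - 1)) * (if g j = k then 1 else 0))) * y k := Finset.sum_comm
    _ = ∑ g : Fin q → Fin n, A i g * ∏ j, y (g j) ^ α := by
        refine Finset.sum_congr rfl fun g _ => ?_
        rw [Finset.sum_congr rfl (fun k _ => mul_assoc (A i g) _ (y k)), ← Finset.mul_sum,
          step1 g]
    _ = tApp A (cPow y α) i := rfl

theorem spec_bound_of_pos {n : ℕ} (N : Matrix (Fin n) (Fin n) ℝ) (hN : ∀ i j, 0 ≤ N i j)
    (y : Fin n → ℝ) (hy : ∀ i, 0 < y i) (s : ℝ) (h : ∀ i, (N *ᵥ y) i < s * y i)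
    (μ : ℂ) (hμ : μ ∈ spectrum ℂ (N.map (fun t : ℝ => (t:ℂ)))) : ‖μ‖ < s := by
  set Nc := N.map (fun t : ℝ => (t:ℂ)) with hNc
  rw [spectrum.mem_iff] at hμ
  have hdet : (algebraMap ℂ (Matrix (Fin n) (Fin n) ℂ) μ - Nc).det = 0 := by
    by_contra hd
    exact hμ ((Matrix.isUnit_iff_isUnit_det _).mpr (isUnit_iff_ne_zero.mpr hd))
  obtain ⟨v, hv0, hv⟩ := (Matrix.exists_mulVec_eq_zero_iff).mpr hdet
  have heig : ∀ i, ∑ k, (N i k : ℂ) * v k = μ * v i := by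
    intro i
    have := congrFun hv i
    simp only [Matrix.sub_mulVec, Pi.sub_apply, Pi.zero_apply, sub_eq_zero] at this
    have halg : (algebraMap ℂ (Matrix (Fin n) (Fin n) ℂ) μ) *ᵥ v = μ • v := by
      rw [Algebra.algebraMap_eq_smul_one, Matrix.smul_mulVec, Matrix.one_mulVec]
    rw [halg] at this
    have := this.symm
    calc ∑ k, (N i k : ℂ) * v k = (Nc *ᵥ v) i := by
          simp [Matrix.mulVec, dotProduct, hNc]
      _ = (μ • v) i := by rw [this]
      _ = μ * v i := rfl
  obtain ⟨j, hvj⟩ : ∃ j, v j ≠ 0 := Function.ne_iff.mp hv0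
  have hne : (Finset.univ : Finset (Fin n)).Nonempty := ⟨j, Finset.mem_univ j⟩
  obtain ⟨i₀, -, hi₀⟩ := Finset.exists_max_image Finset.univ
    (fun i => ‖v i‖ / y i) hne
  set c : ℝ := ‖v i₀‖ / y i₀ with hc
  have hck : ∀ k, ‖v k‖ ≤ c * y k := by
    intro k
    have := hi₀ k (Finset.mem_univ k)
    exact (div_le_iff₀ (hy k)).mp this
  have hcpos : 0 < c := by
    have h1 : 0 < ‖v j‖ := norm_pos_iff.mpr hvj
    have h2 := hi₀ j (Finset.mem_univ j)
    exact lt_of_lt_of_le (div_pos h1 (hy j)) h2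
  have hvi₀ : ‖v i₀‖ = c * y i₀ := by
    rw [hc, div_mul_cancel₀]
    exact (hy i₀).ne'
  have key : ‖μ‖ * ‖v i₀‖ < s * ‖v i₀‖ := by
    calc ‖μ‖ * ‖v i₀‖ = ‖μ * v i₀‖ := (norm_mul _ _).symm
      _ = ‖∑ k, (N i₀ k : ℂ) * v k‖ := by rw [heig i₀]
      _ ≤ ∑ k, ‖(N i₀ k : ℂ) * v k‖ := norm_sum_le _ _
      _ = ∑ k, N i₀ k * ‖v k‖ := by
          refine Finset.sum_congr rfl fun k _ => ?_
          rw [norm_mul, Complex.norm_real, Real.norm_eq_abs, abs_of_nonneg (hN i₀ k)]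
      _ ≤ ∑ k, N i₀ k * (c * y k) := by
          refine Finset.sum_le_sum fun k _ => ?_
          exact mul_le_mul_of_nonneg_left (hck k) (hN i₀ k)
      _ = c * (N *ᵥ y) i₀ := by
          simp only [Matrix.mulVec, dotProduct, Finset.mul_sum]
          exact Finset.sum_congr rfl fun k _ => by ring
      _ < c * (s * y i₀) := mul_lt_mul_of_pos_left (h i₀) hcpos
      _ = s * (c * y i₀) := by ring
      _ = s * ‖v i₀‖ := by rw [hvi₀]
  have hpos : 0 < ‖v i₀‖ := by
    rw [hvi₀]; exact mul_pos hcpos (hy i₀)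
  exact lt_of_mul_lt_mul_right key hpos.le

theorem jacobian_nonsingular_M_on_FSet {m n : ℕ} (hm : 3 ≤ m)
    (A : Fin n → (Fin (m - 1) → Fin n) → ℝ)
    (hsym : IsSemiSymmetric A) (hM : IsStrongMTensor A)
    (b : Fin n → ℝ) (hb : ∀ i, 0 < b i)
    (ε : ℝ) (hε0 : 0 < ε) (hε1 : ε ≤ 1) :
    ∀ y ∈ FSet A b ε, IsNonsingularMMatrix (jacM (fres A b) y) := by
  have hq : (m - 1) ≠ 0 := by omega
  obtain ⟨s₀, B, hB0, hAB, -⟩ := hM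
  have hZ : IsZTensor A := by
    intro i g hg
    rw [hAB i g, identT, if_neg hg]
    simp [hB0 i g]
  rintro y ⟨hypos, hyfeas⟩
  set α : ℝ := 1 / ((m - 1 : ℕ):ℝ) with hα
  set J := jacM (fres A b) y with hJ
  have hJentry := jac_entry_eq A b y hypos
  -- off-diagonal entries are nonpositive
  have hoff : ∀ i k, i ≠ k → J i k ≤ 0 := by
    intro i k hik
    rw [hJ, hJentry i k]
    refine Finset.sum_nonpos fun g _ => ?_
    by_cases hgi : ∀ j, g j = i
    · refine le_of_eq ?_
      have : ∀ j : Fin (m - 1), (∏ j' ∈ Finset.univ.erase j, y (g j') ^ α) *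
          ((α * y (g j) ^ (α - 1)) * (if g j = k then 1 else 0)) = 0 := by
        intro j
        rw [if_neg (by rw [hgi j]; exact hik), mul_zero, mul_zero]
      rw [Finset.sum_congr rfl fun j _ => this j, Finset.sum_const, smul_zero, mul_zero]
    · have hAg : A i g ≤ 0 := hZ i g hgi
      have hsum : 0 ≤ ∑ j, (∏ j' ∈ Finset.univ.erase j, y (g j') ^ α) *
          ((α * y (g j) ^ (α - 1)) * (if g j = k then 1 else 0)) := by
        refine Finset.sum_nonneg fun j _ => ?_
        have h1 : 0 ≤ ∏ j' ∈ Finset.univ.erase j, y (g j') ^ α :=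
          Finset.prod_nonneg fun j' _ => (Real.rpow_pos_of_pos (hypos (g j')) α).le
        have h2 : 0 ≤ α := by positivity
        have h3 : 0 ≤ y (g j) ^ (α - 1) := (Real.rpow_pos_of_pos (hypos (g j)) _).le
        have h4 : 0 ≤ (if g j = k then (1:ℝ) else 0) := by positivity
        positivity
      exact mul_nonpos_of_nonpos_of_nonneg hAg hsum
  -- the row sums against y recover the tensor application
  have hmulvec : ∀ i, (J *ᵥ y) i = tApp A (cPow y α) i := by
    intro i
    have : (J *ᵥ y) i = ∑ k, J i k * y k := by
      simp [Matrix.mulVec, dotProduct]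
    rw [this, Finset.sum_congr rfl fun k _ => by rw [hJ, hJentry i k]]
    exact jac_rowsum hq A y hypos i
  have hJy : ∀ i, 0 < (J *ᵥ y) i := by
    intro i
    rw [hmulvec i]
    exact lt_of_lt_of_le (mul_pos hε0 (hb i)) (hyfeas i)
  -- assemble the M-matrix structure
  refine ⟨hoff, 1 + ∑ i, |J i i|, (1 + ∑ i, |J i i|) • (1 : Matrix (Fin n) (Fin n) ℝ) - J,
    ?_, by rw [sub_sub_cancel], ?_⟩
  · intro i k
    by_cases hik : i = k
    · subst hik
      simp only [Matrix.sub_apply, Matrix.smul_apply, Matrix.one_apply_eq, smul_eq_mul, mul_one]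
      have h1 : J i i ≤ ∑ k, |J k k| :=
        le_trans (le_abs_self _) (Finset.single_le_sum (fun k _ => abs_nonneg (J k k))
          (Finset.mem_univ i))
      linarith
    · simp only [Matrix.sub_apply, Matrix.smul_apply, Matrix.one_apply_ne hik, smul_eq_mul,
        mul_zero, zero_sub, neg_nonneg]
      exact hoff i k hik
  · intro μ hμ
    refine spec_bound_of_pos _ ?_ y hypos _ ?_ μ hμ
    · intro i k
      by_cases hik : i = k
      · subst hik
        simp only [Matrix.sub_apply, Matrix.smul_apply, Matrix.one_apply_eq, smul_eq_mul, mul_one]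
        have h1 : J i i ≤ ∑ k, |J k k| :=
          le_trans (le_abs_self _) (Finset.single_le_sum (fun k _ => abs_nonneg (J k k))
            (Finset.mem_univ i))
        linarith
      · simp only [Matrix.sub_apply, Matrix.smul_apply, Matrix.one_apply_ne hik, smul_eq_mul,
          mul_zero, zero_sub, neg_nonneg]
        exact hoff i k hik
    · intro i
      have : (((1 + ∑ i, |J i i|) • (1 : Matrix (Fin n) (Fin n) ℝ) - J) *ᵥ y) i
          = (1 + ∑ i, |J i i|) * y i - (J *ᵥ y) i := by
        rw [Matrix.sub_mulVec, Matrix.smul_mulVec, Matrix.one_mulVec]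
        simp
      rw [this]
      have := hJy i
      linarith
end
end
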